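/- arXiv:1301.3625 — 7 statements merged into one kernel-verified Lean document; each statement's English description precedes it below -/
import Mathlib

section
/- Let l ≥ 3 be an odd integer and ζ = exp(2πi/l) ∈ ℂ. Let M be the ((l−1)/2) × ((l−1)/2) complex matrix with entries M_{p,q} = ζ^{pq} − ζ^{−pq} for 1 ≤ p, q ≤ (l−1)/2. Then (det M)² = (−l)^{(l−1)/2}; in particular det M ≠ 0. -/
lemma aux_sum (l m : ℕ) (hm : l = 2*m+1) (ζ : ℂ) (hprim : IsPrimitiveRoot ζ l) (a : ℤ) :
    ∑ q ∈ Finset.range m, (ζ ^ (a*(q+1)) + ζ ^ (-(a*(q+1)))) =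
      if (l:ℤ) ∣ a then ((2*m : ℕ) : ℂ) else -1 := by
  have hl0 : l ≠ 0 := by omega
  have hζ0 : ζ ≠ 0 := hprim.ne_zero hl0
  by_cases hd : (l:ℤ) ∣ a
  · simp only [hd, if_true]
    have h1 : ∀ b : ℤ, (l:ℤ) ∣ b → ζ ^ b = 1 := fun b hb =>
      (hprim.zpow_eq_one_iff_dvd b).mpr hb
    rw [Finset.sum_congr rfl (fun q _ => by
      rw [h1 _ (hd.mul_right _), h1 _ ((hd.mul_right ((q:ℤ)+1)).neg_right)])]
    simp
    ring
  · simp only [hd, if_false]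
    set x : ℂ := ζ ^ a with hx
    have hx0 : x ≠ 0 := zpow_ne_zero _ hζ0
    have hxl : x ^ l = 1 := by
      rw [hx, ← zpow_natCast, ← zpow_mul, mul_comm, zpow_mul, zpow_natCast,
        hprim.pow_eq_one, one_zpow]
    have hx1 : x ≠ 1 := by
      rw [hx]
      intro h
      exact hd ((hprim.zpow_eq_one_iff_dvd a).mp h)
    have hterm : ∀ q ∈ Finset.range m, ζ ^ (a*((q:ℤ)+1)) + ζ ^ (-(a*((q:ℤ)+1)))
        = x ^ (q+1) + x ^ (m+1+(m-1-q)) := by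
      intro q hq
      rw [Finset.mem_range] at hq
      have e1 : ζ ^ (a*((q:ℤ)+1)) = x ^ (q+1) := by
        rw [hx, ← zpow_natCast (ζ ^ a), ← zpow_mul]
        push_cast
        ring_nf
      have e2 : ζ ^ (-(a*((q:ℤ)+1))) = (x ^ (q+1))⁻¹ := by
        rw [← e1, ← zpow_neg]
      rw [e1, e2]
      congr 1
      symm
      apply eq_inv_of_mul_eq_one_left
      rw [← pow_add]
      have : m + 1 + (m - 1 - q) + (q + 1) = l := by omega
      rw [this, hxl]
    have hs2 : ∑ j ∈ Finset.range m, x ^ (m+1+j) = ∑ j ∈ Finset.range m, x ^ (m+j+1) := by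
      apply Finset.sum_congr rfl
      intro j _
      congr 1
      omega
    rw [Finset.sum_congr rfl hterm, Finset.sum_add_distrib,
      Finset.sum_range_reflect (fun j => x ^ (m+1+j)) m, hs2,
      ← Finset.sum_range_add (fun k => x ^ (k+1)) m m]
    have h2m : ∑ k ∈ Finset.range (2*m+1), x ^ k = 0 := by
      rw [geom_sum_eq hx1, ← hm, hxl, sub_self, zero_div]
    have := Finset.sum_range_succ' (fun k => x ^ k) (2*m)
    rw [hm] at *
    rw [h2m] at this
    have : ∑ i ∈ Finset.range (2*m), x ^ (i+1) = -1 := by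
      rw [eq_neg_iff_add_eq_zero, ← pow_zero x]
      exact this.symm
    rw [← this]
    apply Finset.sum_congr (by ring_nf)
    intro k hk
    simp

lemma prod_expand (ζ : ℂ) (hζ0 : ζ ≠ 0) (a b : ℤ) :
    (ζ ^ a - ζ ^ (-a)) * (ζ ^ b - ζ ^ (-b)) =
      (ζ ^ (a+b) + ζ ^ (-(a+b))) - (ζ ^ (a-b) + ζ ^ (-(a-b))) := by
  rw [zpow_add₀ hζ0, zpow_sub₀ hζ0, neg_add, neg_sub, zpow_add₀ hζ0, zpow_sub₀ hζ0,
    zpow_neg, zpow_neg]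
  have ha : ζ ^ a ≠ 0 := zpow_ne_zero _ hζ0
  have hb : ζ ^ b ≠ 0 := zpow_ne_zero _ hζ0
  field_simp
  ring

/-- Let `l ≥ 3` be an odd integer and `ζ = exp(2πi/l)`.  The square of the determinant of the
`((l-1)/2) × ((l-1)/2)` matrix with entries `ζ^{pq} - ζ^{-pq}` (for `1 ≤ p, q ≤ (l-1)/2`)
equals `(-l)^{(l-1)/2}`; in particular the determinant is nonzero. -/
theorem det_sq_eq_neg_l_pow (l : ℕ) (hl : 3 ≤ l) (hodd : Odd l)
    (ζ : ℂ) (hζ : ζ = Complex.exp (2 * Real.pi * Complex.I / l))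
    (M : Matrix (Fin ((l - 1) / 2)) (Fin ((l - 1) / 2)) ℂ)
    (hM : ∀ p q, M p q =
      ζ ^ ((p.1 + 1) * (q.1 + 1)) - ζ⁻¹ ^ ((p.1 + 1) * (q.1 + 1))) :
    M.det ^ 2 = (-(l : ℂ)) ^ ((l - 1) / 2) ∧ M.det ≠ 0 := by
  obtain ⟨k, hk⟩ := hodd
  have hlm : l = 2 * ((l - 1) / 2) + 1 := by omega
  have hprim : IsPrimitiveRoot ζ l := by
    rw [hζ]; exact Complex.isPrimitiveRoot_exp l (by omega)
  have hζ0 : ζ ≠ 0 := hprim.ne_zero (by omega)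
  have hM' : ∀ p q : Fin ((l - 1) / 2), M p q =
      ζ ^ (((p.1:ℤ)+1) * ((q.1:ℤ)+1)) - ζ ^ (-(((p.1:ℤ)+1) * ((q.1:ℤ)+1))) := by
    intro p q
    rw [hM p q, ← zpow_natCast ζ, ← zpow_natCast ζ⁻¹, inv_zpow, ← zpow_neg]
    congr 2 <;> push_cast <;> ring
  have key : M * M.transpose = (-(l:ℂ)) • (1 : Matrix (Fin ((l - 1) / 2)) (Fin ((l - 1) / 2)) ℂ) := by
    ext p r
    rw [Matrix.mul_apply, Matrix.smul_apply, Matrix.one_apply]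
    have expand : ∀ q : Fin ((l - 1) / 2), M p q * M.transpose q r =
        (ζ ^ ((((p.1:ℤ)+1) + ((r.1:ℤ)+1)) * ((q.1:ℤ)+1))
          + ζ ^ (-((((p.1:ℤ)+1) + ((r.1:ℤ)+1)) * ((q.1:ℤ)+1))))
        - (ζ ^ ((((p.1:ℤ)+1) - ((r.1:ℤ)+1)) * ((q.1:ℤ)+1))
          + ζ ^ (-((((p.1:ℤ)+1) - ((r.1:ℤ)+1)) * ((q.1:ℤ)+1)))) := by
      intro q
      rw [Matrix.transpose_apply, hM' p q, hM' r q,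
        prod_expand ζ hζ0 (((p.1:ℤ)+1) * ((q.1:ℤ)+1)) (((r.1:ℤ)+1) * ((q.1:ℤ)+1))]
      ring_nf
    rw [Finset.sum_congr rfl (fun q _ => expand q), Finset.sum_sub_distrib,
      Fin.sum_univ_eq_sum_range
        (fun q => ζ ^ ((((p.1:ℤ)+1) + ((r.1:ℤ)+1)) * ((q:ℤ)+1))
          + ζ ^ (-((((p.1:ℤ)+1) + ((r.1:ℤ)+1)) * ((q:ℤ)+1)))) ((l - 1) / 2),
      Fin.sum_univ_eq_sum_range
        (fun q => ζ ^ ((((p.1:ℤ)+1) - ((r.1:ℤ)+1)) * ((q:ℤ)+1))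
          + ζ ^ (-((((p.1:ℤ)+1) - ((r.1:ℤ)+1)) * ((q:ℤ)+1)))) ((l - 1) / 2),
      aux_sum l ((l - 1) / 2) hlm ζ hprim _, aux_sum l ((l - 1) / 2) hlm ζ hprim _]
    have hp := p.2
    have hr := r.2
    have hnd1 : ¬ (l:ℤ) ∣ (((p.1:ℤ)+1) + ((r.1:ℤ)+1)) := by
      intro h
      have hpos : (0:ℤ) < ((p.1:ℤ)+1) + ((r.1:ℤ)+1) := by omega
      have := Int.le_of_dvd hpos h
      omega
    rw [if_neg hnd1]
    by_cases hpr : p = r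
    · subst hpr
      rw [if_pos ⟨0, by ring⟩, if_pos rfl, smul_eq_mul, mul_one]
      have hc : ((2*((l-1)/2) : ℕ) : ℂ) = (l : ℂ) - 1 := by
        have h9 : (l:ℂ) = ((2*((l-1)/2) + 1 : ℕ) : ℂ) := by rw [← hlm]
        rw [h9]; push_cast; ring
      rw [hc]; ring
    · have hne : p.1 ≠ r.1 := fun h => hpr (Fin.ext h)
      have hnd2 : ¬ (l:ℤ) ∣ (((p.1:ℤ)+1) - ((r.1:ℤ)+1)) := by
        intro h
        rcases lt_or_gt_of_ne (fun h' : ((p.1:ℤ)+1) = ((r.1:ℤ)+1) => hne (by omega)) with h' | h'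
        · have := Int.le_of_dvd (by omega) h.neg_right
          omega
        · have := Int.le_of_dvd (by omega) h
          omega
      rw [if_neg hnd2, if_neg hpr, smul_eq_mul, mul_zero]
      ring
  have hdet : M.det * M.det = (-(l:ℂ)) ^ ((l - 1) / 2) := by
    have h1 : M.det * M.transpose.det =
        ((-(l:ℂ)) • (1 : Matrix (Fin ((l - 1) / 2)) (Fin ((l - 1) / 2)) ℂ)).det := by
      rw [← Matrix.det_mul, key]
    rw [Matrix.det_transpose] at h1
    rw [h1, Matrix.det_smul, Matrix.det_one, mul_one, Fintype.card_fin]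
  have hne : (-(l:ℂ)) ^ ((l - 1) / 2) ≠ 0 := by
    apply pow_ne_zero
    simp only [ne_eq, neg_eq_zero, Nat.cast_eq_zero]
    omega
  constructor
  · rw [sq, hdet]
  · intro h
    rw [h, mul_zero] at hdet
    exact hne hdet.symm
end

section
/- Let l ≥ 3 be an odd integer, ζ = exp(2πi/l) ∈ ℂ, and k = (l+1)/2. Let x₁, …, x_k ∈ ℂ and let N be the k × k complex matrix with entries N_{p,q} = ζ^{pq} − ζ^{−pq} for 1 ≤ q ≤ k−1 and N_{p,k} = x_p, for 1 ≤ p ≤ k. Then det N = (x_{k−1} + x_k) · det M, where M is the (k−1) × (k−1) matrix with entries M_{p,q} = ζ^{pq} − ζ^{−pq} for 1 ≤ p, q ≤ k−1. -/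
/-- Let `l ≥ 3` be odd, `ζ = exp(2πi/l)`, `k = (l+1)/2`.  If `N` is the `k × k` matrix whose
`(p,q)` entry is `ζ^{pq} - ζ^{-pq}` for `1 ≤ q ≤ k-1` and whose last column is `x_p`
(`1 ≤ p ≤ k`), then `det N = (x_{k-1} + x_k) · det M`, where `M` is the `(k-1) × (k-1)`
matrix with entries `ζ^{pq} - ζ^{-pq}` for `1 ≤ p, q ≤ k-1`. -/
theorem det_bordered_eq (l : ℕ) (hl : 3 ≤ l) (hodd : Odd l)
    (k : ℕ) (hk : k = (l + 1) / 2)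
    (ζ : ℂ) (hζ : ζ = Complex.exp (2 * Real.pi * Complex.I / l))
    (x : ℕ → ℂ)
    (N : Matrix (Fin k) (Fin k) ℂ)
    (hN : ∀ p q : Fin k, N p q =
      if q.1 + 1 ≤ k - 1 then
        ζ ^ ((p.1 + 1) * (q.1 + 1)) - ζ⁻¹ ^ ((p.1 + 1) * (q.1 + 1))
      else x (p.1 + 1))
    (M : Matrix (Fin (k - 1)) (Fin (k - 1)) ℂ)
    (hM : ∀ p q, M p q =
      ζ ^ ((p.1 + 1) * (q.1 + 1)) - ζ⁻¹ ^ ((p.1 + 1) * (q.1 + 1))) :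
    N.det = (x (k - 1) + x k) * M.det := by
  obtain ⟨t, ht⟩ := hodd
  obtain ⟨n, rfl⟩ : ∃ n, k = n + 2 := ⟨k - 2, by omega⟩
  have hl' : l = 2 * n + 3 := by omega
  have hζ0 : ζ ≠ 0 := by rw [hζ]; exact Complex.exp_ne_zero _
  have hζl : ζ ^ l = 1 := by
    rw [hζ, ← Complex.exp_nat_mul]
    have hlne : (l : ℂ) ≠ 0 := Nat.cast_ne_zero.mpr (by omega)
    have : (l : ℂ) * (2 * Real.pi * Complex.I / l) = 2 * Real.pi * Complex.I := by
      field_simp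
    rw [this, Complex.exp_two_pi_mul_I]
  have key : ∀ a : ℕ, ζ ^ ((n + 2) * a) * ζ ^ ((n + 1) * a) = 1 := by
    intro a
    rw [← pow_add]
    have : (n + 2) * a + (n + 1) * a = l * a := by rw [hl']; ring
    rw [this, pow_mul, hζl, one_pow]
  -- row operation: add row n (0-indexed) to the last row
  set i₀ : Fin (n + 2) := ⟨n, by omega⟩
  have hne : Fin.last (n + 1) ≠ i₀ := by
    simp [i₀, Fin.ext_iff]
  have hdet : N.det = (N.updateRow (Fin.last (n + 1))
      (N (Fin.last (n + 1)) + N i₀)).det :=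
    (Matrix.det_updateRow_add_self N hne).symm
  set N' := N.updateRow (Fin.last (n + 1)) (N (Fin.last (n + 1)) + N i₀) with hN'
  -- last row of N' is zero except at the last column
  have hrow : ∀ q : Fin (n + 2), q ≠ Fin.last (n + 1) → N' (Fin.last (n + 1)) q = 0 := by
    intro q hq
    have hq' : q.1 + 1 ≤ n + 1 := by
      have := q.2
      have : q.1 ≠ n + 1 := fun h => hq (Fin.ext h)
      omega
    have h1 := hN (Fin.last (n + 1)) q
    have h2 := hN i₀ q
    rw [if_pos (by simpa using hq')] at h1 h2
    have hinv2 : ζ ⁻¹ ^ ((n + 1 + 1) * (q.1 + 1)) = ζ ^ ((n + 1) * (q.1 + 1)) := by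
      rw [inv_pow]
      exact inv_eq_of_mul_eq_one_left (by rw [mul_comm]; exact key (q.1 + 1))
    have hinv1 : ζ ⁻¹ ^ ((n + 1) * (q.1 + 1)) = ζ ^ ((n + 1 + 1) * (q.1 + 1)) := by
      rw [inv_pow]
      exact inv_eq_of_mul_eq_one_left (key (q.1 + 1))
    simp only [N', Matrix.updateRow_self, Pi.add_apply]
    rw [h1, h2]
    simp only [Fin.val_last, i₀]
    rw [hinv1, hinv2]
    ring
  have hlast : N' (Fin.last (n + 1)) (Fin.last (n + 1)) = x (n + 1) + x (n + 2) := by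
    have h1 := hN (Fin.last (n + 1)) (Fin.last (n + 1))
    have h2 := hN i₀ (Fin.last (n + 1))
    rw [if_neg (by simp)] at h1 h2
    simp only [N', Matrix.updateRow_self, Pi.add_apply]
    rw [h1, h2]
    simp only [Fin.val_last, i₀]
    ring
  -- expand along the last row
  rw [hdet, Matrix.det_succ_row N' (Fin.last (n + 1))]
  rw [Finset.sum_eq_single (Fin.last (n + 1))]
  · have hsub : N'.submatrix (Fin.last (n + 1)).succAbove (Fin.last (n + 1)).succAbove
        = M := by
      ext p q
      simp only [Matrix.submatrix_apply, Fin.succAbove_last]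
      have hpne : (p.castSucc : Fin (n + 2)) ≠ Fin.last (n + 1) := by
        simp [Fin.ext_iff]; omega
      rw [hN', Matrix.updateRow_ne hpne, hN, hM]
      rw [if_pos (by simp; omega)]
      simp
    rw [hsub, hlast]
    simp only [Fin.val_last]
    have hsgn : ((-1 : ℂ)) ^ (n + 1 + (n + 1)) = 1 := by
      rw [show n + 1 + (n + 1) = 2 * (n + 1) from by ring, pow_mul]
      norm_num
    rw [hsgn, one_mul]
    rfl
  · intro b _ hb
    rw [hrow b hb]
    ring
  · intro h
    exact absurd (Finset.mem_univ _) h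
end

section
/- Let l ≥ 3 be an odd integer, ζ = exp(2πi/l) ∈ ℂ, and k = (l+1)/2. Suppose I₁, …, I_k are nonzero complex numbers and J₁, …, J_k are complex numbers such that for every p the quotient J_p / I_p lies in i·ℝ_{>0} (i.e., is purely imaginary with positive imaginary part). Let N be the k × k matrix with entries N_{p,q} = (ζ^{pq} − ζ^{−pq}) I_p for 1 ≤ q ≤ k−1 and N_{p,k} = J_p. Then det N ≠ 0. -/
open Finset Real

lemma aux_cos_sum (l : ℕ) (hl : 0 < l) (m : ℤ) (hm : ¬ (l:ℤ) ∣ m) :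
    ∑ p ∈ Finset.range l, Real.cos (2*π*p*m/l) = 0 := by
  have hl0 : (l:ℝ) ≠ 0 := Nat.cast_ne_zero.mpr hl.ne'
  set z : ℂ := Complex.exp (((2*π*m/l : ℝ) : ℂ) * Complex.I) with hz
  have hzp : ∀ p : ℕ, z ^ p = Complex.exp (((2*π*p*m/l : ℝ) : ℂ) * Complex.I) := by
    intro p
    rw [hz, ← Complex.exp_nat_mul]
    congr 1
    push_cast
    ring
  have hz1 : z ≠ 1 := by
    intro h
    rw [hz, Complex.exp_eq_one_iff] at h
    obtain ⟨n, hn⟩ := h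
    have him := congrArg Complex.im hn
    simp [Complex.ofReal_mul, Complex.ofReal_div] at him
    apply hm
    refine ⟨n, ?_⟩
    have hπ := Real.pi_ne_zero
    field_simp at him
    have : (m : ℝ) = ((l : ℤ) * n : ℤ) := by push_cast; nlinarith [Real.pi_pos]
    exact_mod_cast this
  have hzl : z ^ l = 1 := by
    rw [hz, ← Complex.exp_nat_mul]
    have harg : (l:ℂ) * (((2*π*m/l : ℝ) : ℂ) * Complex.I) = m * (2*π*Complex.I) := by
      have hl0c : (l:ℂ) ≠ 0 := Nat.cast_ne_zero.mpr hl.ne'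
      push_cast
      field_simp
    rw [harg]
    exact Complex.exp_int_mul_two_pi_mul_I m
  have hsum : ∑ p ∈ Finset.range l, z ^ p = 0 := by
    rw [geom_sum_eq hz1, hzl]
    simp
  calc ∑ p ∈ Finset.range l, Real.cos (2*π*p*m/l)
      = ∑ p ∈ Finset.range l, (z ^ p).re := by
        refine Finset.sum_congr rfl fun p _ => ?_
        rw [hzp, Complex.exp_ofReal_mul_I_re]
    _ = 0 := by rw [← Complex.re_sum, hsum, Complex.zero_re]

lemma aux_cos_half (l k : ℕ) (hl : 3 ≤ l) (hlk : 2*k = l+1) (m : ℤ) (hm : ¬ (l:ℤ) ∣ m) :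
    ∑ p ∈ Finset.range (k-1), Real.cos (2*π*((p:ℝ)+1)*m/l) = -(1/2) := by
  have hl0 : (l:ℝ) ≠ 0 := Nat.cast_ne_zero.mpr (by omega)
  have h0 := aux_cos_sum l (by omega) m hm
  set f : ℕ → ℝ := fun p => Real.cos (2*π*p*m/l) with hf
  have hsplit0 : ∑ p ∈ Finset.range l, f p
      = f 0 + ∑ p ∈ Finset.Ico 1 l, f p := by
    rw [Finset.range_eq_Ico, ← Finset.sum_Ico_consecutive f (by omega : 0 ≤ 1) (by omega : 1 ≤ l)]
    simp
  have hsplit1 : ∑ p ∈ Finset.Ico 1 l, f p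
      = ∑ p ∈ Finset.Ico 1 k, f p + ∑ p ∈ Finset.Ico k l, f p :=
    (Finset.sum_Ico_consecutive f (by omega : 1 ≤ k) (by omega : k ≤ l)).symm
  have hrefl : ∑ p ∈ Finset.Ico k l, f p = ∑ p ∈ Finset.Ico 1 k, f p := by
    refine Finset.sum_nbij' (fun p => l - p) (fun p => l - p) ?_ ?_ ?_ ?_ ?_
    · intro p hp; simp only [Finset.mem_Ico] at *; omega
    · intro p hp; simp only [Finset.mem_Ico] at *; omega
    · intro p hp; simp only [Finset.mem_Ico] at *; omega
    · intro p hp; simp only [Finset.mem_Ico] at *; omega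
    · intro p hp
      simp only [Finset.mem_Ico] at hp
      have hc : ((l - p : ℕ) : ℝ) = (l:ℝ) - p := by
        rw [Nat.cast_sub (by omega)]
      simp only [hf, hc]
      rw [show 2*π*((l:ℝ)-p)*m/l = (m:ℝ)*(2*π) - 2*π*p*m/l by field_simp,
        Real.cos_int_mul_two_pi_sub]
  have hf0 : f 0 = 1 := by simp [hf]
  have hS : ∑ p ∈ Finset.Ico 1 k, f p = -(1/2) := by
    rw [hsplit0, hsplit1, hrefl, hf0] at h0
    linarith
  rw [Finset.sum_Ico_eq_sum_range] at hS
  rw [← hS]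
  refine Finset.sum_congr rfl fun p _ => ?_
  simp only [hf]
  push_cast
  ring_nf

lemma aux_orth (l k : ℕ) (hl : 3 ≤ l) (hlk : 2*k = l+1) (a b : ℕ)
    (ha1 : 1 ≤ a) (ha2 : a ≤ k-1) (hb1 : 1 ≤ b) (hb2 : b ≤ k-1) :
    ∑ p ∈ Finset.range (k-1), Real.sin (2*π*((p:ℝ)+1)*a/l) * Real.sin (2*π*((p:ℝ)+1)*b/l)
      = if a = b then (l:ℝ)/4 else 0 := by
  have hk2 : 2 ≤ k := by omega
  have hl0 : (l:ℝ) ≠ 0 := Nat.cast_ne_zero.mpr (by omega)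
  have hprod : ∀ x y : ℝ, Real.sin x * Real.sin y = (Real.cos (x-y) - Real.cos (x+y))/2 := by
    intro x y
    have h := Real.cos_sub_cos (x - y) (x + y)
    rw [show ((x-y)+(x+y))/2 = x by ring, show ((x-y)-(x+y))/2 = -y by ring,
      Real.sin_neg] at h
    linarith
  have hadd_dvd : ¬ (l:ℤ) ∣ ((a:ℤ) + (b:ℤ)) := by
    intro h
    have := Int.le_of_dvd (by omega) h
    omega
  have hsum_add := aux_cos_half l k hl hlk ((a:ℤ) + (b:ℤ)) hadd_dvd
  have hstep : ∀ p : ℕ,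
      Real.sin (2*π*((p:ℝ)+1)*a/l) * Real.sin (2*π*((p:ℝ)+1)*b/l)
      = (Real.cos (2*π*((p:ℝ)+1)*((((a:ℤ)-(b:ℤ)):ℤ):ℝ)/l)
          - Real.cos (2*π*((p:ℝ)+1)*((((a:ℤ)+(b:ℤ)):ℤ):ℝ)/l))/2 := by
    intro p
    rw [hprod]
    congr 2
    · push_cast; field_simp
    · push_cast; field_simp
  rw [Finset.sum_congr rfl fun p _ => hstep p]
  rw [← Finset.sum_div, Finset.sum_sub_distrib, hsum_add]
  by_cases hab : a = b
  · subst hab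
    rw [if_pos rfl]
    have hone : ∑ p ∈ Finset.range (k-1), Real.cos (2*π*((p:ℝ)+1)*((((a:ℤ)-(a:ℤ)):ℤ):ℝ)/l)
        = ((k-1 : ℕ) : ℝ) := by
      rw [Finset.sum_congr rfl fun p _ => by
        rw [show 2*π*((p:ℝ)+1)*((((a:ℤ)-(a:ℤ)):ℤ):ℝ)/l = 0 by push_cast; ring, Real.cos_zero]]
      simp
    rw [hone]
    have hcast : ((k-1:ℕ):ℝ) = ((l:ℝ)-1)/2 := by
      have h2 : ((2*k:ℕ):ℝ) = ((l+1:ℕ):ℝ) := by rw [hlk]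
      push_cast [Nat.cast_sub (by omega : 1 ≤ k)] at h2 ⊢
      linarith
    rw [hcast]
    ring
  · simp only [if_neg hab]
    have hsub_dvd : ¬ (l:ℤ) ∣ ((a:ℤ) - (b:ℤ)) := by
      intro h
      have := Int.eq_zero_of_abs_lt_dvd h (by rw [abs_lt]; omega)
      omega
    rw [aux_cos_half l k hl hlk ((a:ℤ) - (b:ℤ)) hsub_dvd]
    ring

lemma aux_sin_fold (l k : ℕ) (hl : 3 ≤ l) (hlk : 2*k = l+1) (q : ℕ) :
    Real.sin (2*π*((k:ℝ)-1)*((q:ℝ)+1)/l) + Real.sin (2*π*(k:ℝ)*((q:ℝ)+1)/l) = 0 := by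
  have hl0 : (l:ℝ) ≠ 0 := Nat.cast_ne_zero.mpr (by omega)
  have hk : 2*(k:ℝ) = (l:ℝ)+1 := by exact_mod_cast congrArg (Nat.cast : ℕ → ℝ) hlk
  have harg : 2*π*(k:ℝ)*((q:ℝ)+1)/l
      = (((q:ℤ)+1 : ℤ):ℝ)*(2*π) - 2*π*((k:ℝ)-1)*((q:ℝ)+1)/l := by
    push_cast
    field_simp
    linear_combination hk
  rw [harg, Real.sin_int_mul_two_pi_sub]
  ring

lemma aux_Mdet (l k : ℕ) (hl : 3 ≤ l) (hlk : 2*k = l+1) (r : ℕ → ℝ)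
    (hrpos : ∀ p, 1 ≤ p → p ≤ k → 0 < r p) :
    (Matrix.of fun p q : Fin k =>
      if (q:ℕ)+1 ≤ k-1 then Real.sin (2*π*(((p:ℕ):ℝ)+1)*(((q:ℕ):ℝ)+1)/l)
      else r ((p:ℕ)+1)).det ≠ 0 := by
  have hk2 : 2 ≤ k := by omega
  have hl0 : (l:ℝ) ≠ 0 := Nat.cast_ne_zero.mpr (by omega)
  set M : Matrix (Fin k) (Fin k) ℝ := Matrix.of fun p q : Fin k =>
      if (q:ℕ)+1 ≤ k-1 then Real.sin (2*π*(((p:ℕ):ℝ)+1)*(((q:ℕ):ℝ)+1)/l)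
      else r ((p:ℕ)+1) with hM
  intro hdet0
  obtain ⟨v, hv0, hveq⟩ := Matrix.exists_mulVec_eq_zero_iff.mpr hdet0
  set w : ℕ → ℝ := fun q => if h : q < k then v ⟨q, h⟩ else 0 with hw
  have hwv : ∀ q : Fin k, w q.1 = v q := by
    intro q
    simp only [hw, q.isLt, dif_pos, Fin.eta]
  have E : ∀ p : Fin k,
      (∑ q ∈ Finset.range (k-1), Real.sin (2*π*(((p:ℕ):ℝ)+1)*((q:ℝ)+1)/l) * w q)
        + r ((p:ℕ)+1) * w (k-1) = 0 := by
    intro p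
    have h := congrFun hveq p
    simp only [Matrix.mulVec, dotProduct, Pi.zero_apply] at h
    set g : ℕ → ℝ := fun q =>
      (if q+1 ≤ k-1 then Real.sin (2*π*(((p:ℕ):ℝ)+1)*((q:ℝ)+1)/l) else r ((p:ℕ)+1)) * w q
      with hg
    have h2 : ∑ q : Fin k, M p q * v q = ∑ q ∈ Finset.range k, g q := by
      rw [← Fin.sum_univ_eq_sum_range g k]
      refine Finset.sum_congr rfl fun q _ => ?_
      simp only [hg, hM, Matrix.of_apply, hwv q]
    have h3 := Finset.sum_range_succ g (k-1)
    rw [show k-1+1 = k by omega] at h3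
    rw [h2, h3] at h
    have h4 : g (k-1) = r ((p:ℕ)+1) * w (k-1) := by
      simp only [hg, if_neg (by omega : ¬ (k-1)+1 ≤ k-1)]
    have h5 : ∑ q ∈ Finset.range (k-1), g q
        = ∑ q ∈ Finset.range (k-1), Real.sin (2*π*(((p:ℕ):ℝ)+1)*((q:ℝ)+1)/l) * w q := by
      refine Finset.sum_congr rfl fun q hq => ?_
      have hq' : q+1 ≤ k-1 := by simpa using Finset.mem_range.mp hq
      simp only [hg, if_pos hq']
    rw [h4, h5] at h
    exact h
  have hwlast : w (k-1) = 0 := by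
    have e1 := E ⟨k-2, by omega⟩
    have e2 := E ⟨k-1, by omega⟩
    simp only at e1 e2
    have hc1 : ((k-2:ℕ):ℝ)+1 = (k:ℝ)-1 := by
      rw [Nat.cast_sub (by omega)]; push_cast; ring
    have hc2 : ((k-1:ℕ):ℝ)+1 = (k:ℝ) := by
      rw [Nat.cast_sub (by omega)]; push_cast; ring
    rw [hc1] at e1
    rw [hc2] at e2
    have hAB : (∑ q ∈ Finset.range (k-1), Real.sin (2*π*((k:ℝ)-1)*((q:ℝ)+1)/l) * w q)
        + (∑ q ∈ Finset.range (k-1), Real.sin (2*π*(k:ℝ)*((q:ℝ)+1)/l) * w q) = 0 := by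
      rw [← Finset.sum_add_distrib]
      refine Finset.sum_eq_zero fun q _ => ?_
      have hf := aux_sin_fold l k hl hlk q
      linear_combination (w q) * hf
    have e3 : (r (k-2+1) + r (k-1+1)) * w (k-1) = 0 := by linarith
    have hrp : 0 < r (k-2+1) + r (k-1+1) :=
      add_pos (hrpos _ (by omega) (by omega)) (hrpos _ (by omega) (by omega))
    rcases mul_eq_zero.mp e3 with h | h
    · exact absurd h hrp.ne'
    · exact h
  have hE3 : ∀ p ∈ Finset.range (k-1),
      ∑ q ∈ Finset.range (k-1), Real.sin (2*π*((p:ℝ)+1)*((q:ℝ)+1)/l) * w q = 0 := by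
    intro p hp
    have hpk := Finset.mem_range.mp hp
    have := E ⟨p, by omega⟩
    rw [hwlast, mul_zero, add_zero] at this
    exact this
  have hwq : ∀ j ∈ Finset.range (k-1), w j = 0 := by
    intro j hj
    have hjk : j < k-1 := Finset.mem_range.mp hj
    have hcalc : ∑ p ∈ Finset.range (k-1), Real.sin (2*π*((p:ℝ)+1)*((j:ℝ)+1)/l) *
        (∑ q ∈ Finset.range (k-1), Real.sin (2*π*((p:ℝ)+1)*((q:ℝ)+1)/l) * w q) = 0 :=
      Finset.sum_eq_zero fun p hp => by rw [hE3 p hp, mul_zero]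
    have hstep1 : ∑ p ∈ Finset.range (k-1), Real.sin (2*π*((p:ℝ)+1)*((j:ℝ)+1)/l) *
        (∑ q ∈ Finset.range (k-1), Real.sin (2*π*((p:ℝ)+1)*((q:ℝ)+1)/l) * w q)
        = ∑ q ∈ Finset.range (k-1),
            (∑ p ∈ Finset.range (k-1), Real.sin (2*π*((p:ℝ)+1)*((q:ℝ)+1)/l)
              * Real.sin (2*π*((p:ℝ)+1)*((j:ℝ)+1)/l)) * w q := by
      rw [Finset.sum_congr rfl fun p (_ : p ∈ Finset.range (k-1)) => Finset.mul_sum _ _ _]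
      rw [Finset.sum_comm]
      refine Finset.sum_congr rfl fun q _ => ?_
      rw [Finset.sum_mul]
      exact Finset.sum_congr rfl fun p _ => by ring
    have hstep2 : ∀ q ∈ Finset.range (k-1),
        (∑ p ∈ Finset.range (k-1), Real.sin (2*π*((p:ℝ)+1)*((q:ℝ)+1)/l)
          * Real.sin (2*π*((p:ℝ)+1)*((j:ℝ)+1)/l)) * w q
        = if q = j then ((l:ℝ)/4) * w q else 0 := by
      intro q hq
      have hqk : q < k-1 := Finset.mem_range.mp hq
      have horth := aux_orth l k hl hlk (q+1) (j+1) (by omega) (by omega) (by omega) (by omega)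
      push_cast at horth
      rw [horth]
      by_cases hqj : q = j
      · rw [if_pos (by omega), if_pos hqj]
      · rw [if_neg (by omega), if_neg hqj, zero_mul]
    rw [hstep1, Finset.sum_congr rfl hstep2, Finset.sum_ite_eq' (Finset.range (k-1)) j
      (fun q => ((l:ℝ)/4) * w q), if_pos hj] at hcalc
    have : w j = 0 := by
      by_contra hwj
      exact hl0 (by
        have := mul_eq_zero.mp hcalc
        rcases this with h | h
        · have : (l:ℝ) = 0 := by linarith
          exact this
        · exact absurd h hwj)
    exact this
  apply hv0
  funext q
  have hq : w q.1 = 0 := by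
    by_cases h : q.1 < k-1
    · exact hwq q.1 (Finset.mem_range.mpr h)
    · have : q.1 = k-1 := by omega
      rw [this]; exact hwlast
  simp only [Pi.zero_apply]
  rw [← hwv q]
  exact hq

/-- Let `l ≥ 3` be odd, `ζ = exp(2πi/l)`, `k = (l+1)/2`.  Suppose `I₁, …, I_k` are nonzero
complex numbers and `J₁, …, J_k` are complex numbers with `J_p / I_p ∈ i·ℝ_{>0}` for every `p`.
Then the `k × k` matrix with entries `(ζ^{pq} - ζ^{-pq}) I_p` for `1 ≤ q ≤ k-1` and last
column `J_p` has nonzero determinant. -/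
theorem det_ne_zero_of_quot_purely_imaginary (l : ℕ) (hl : 3 ≤ l) (hodd : Odd l)
    (k : ℕ) (hk : k = (l + 1) / 2)
    (ζ : ℂ) (hζ : ζ = Complex.exp (2 * Real.pi * Complex.I / l))
    (I J : ℕ → ℂ)
    (hI : ∀ p, 1 ≤ p → p ≤ k → I p ≠ 0)
    (hJI : ∀ p, 1 ≤ p → p ≤ k → ∃ r : ℝ, 0 < r ∧ J p / I p = Complex.I * r)
    (N : Matrix (Fin k) (Fin k) ℂ)
    (hN : ∀ p q : Fin k, N p q =
      if q.1 + 1 ≤ k - 1 then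
        (ζ ^ ((p.1 + 1) * (q.1 + 1)) - ζ⁻¹ ^ ((p.1 + 1) * (q.1 + 1))) * I (p.1 + 1)
      else J (p.1 + 1)) :
    N.det ≠ 0 := by
  have hlm : l % 2 = 1 := Nat.odd_iff.mp hodd
  have hk2 : 2*k = l+1 := by omega
  have hl0 : (l:ℝ) ≠ 0 := Nat.cast_ne_zero.mpr (by omega)
  have hl0c : (l:ℂ) ≠ 0 := Nat.cast_ne_zero.mpr (by omega)
  have hJ' : ∀ p, 1 ≤ p → p ≤ k → ∃ s : ℝ, 0 < s ∧ J p = Complex.I * s * I p := by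
    intro p h1 h2
    obtain ⟨s, hs, hq⟩ := hJI p h1 h2
    refine ⟨s, hs, ?_⟩
    have hIne := hI p h1 h2
    rw [← div_mul_cancel₀ (J p) hIne, hq]
  choose! r hrpos hrJ using hJ'
  set M : Matrix (Fin k) (Fin k) ℝ := Matrix.of fun p q : Fin k =>
      if (q:ℕ)+1 ≤ k-1 then Real.sin (2*π*(((p:ℕ):ℝ)+1)*(((q:ℕ):ℝ)+1)/l)
      else r ((p:ℕ)+1) with hM
  set c : Fin k → ℂ := fun q => if (q:ℕ)+1 ≤ k-1 then 2*Complex.I else Complex.I with hc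
  -- the exponential-sine identity
  have hζpow : ∀ m : ℕ, ζ ^ m = Complex.exp (((2*π*m/l : ℝ) : ℂ) * Complex.I) := by
    intro m
    rw [hζ, ← Complex.exp_nat_mul]
    congr 1
    push_cast
    ring
  have hζinvpow : ∀ m : ℕ, ζ⁻¹ ^ m = Complex.exp (((-(2*π*m/l) : ℝ) : ℂ) * Complex.I) := by
    intro m
    rw [hζ, ← Complex.exp_neg, ← Complex.exp_nat_mul]
    congr 1
    push_cast
    ring
  have hdiff : ∀ θ : ℝ, Complex.exp ((θ:ℂ)*Complex.I) - Complex.exp (((-θ : ℝ):ℂ)*Complex.I)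
      = 2*Complex.I*((Real.sin θ : ℝ):ℂ) := by
    intro θ
    rw [Complex.exp_mul_I, Complex.exp_mul_I]
    push_cast
    rw [Complex.cos_neg, Complex.sin_neg]
    ring
  have key : ∀ p q : Fin k, N p q = I ((p:ℕ)+1) * (c q * ((M p q : ℝ) : ℂ)) := by
    intro p q
    rw [hN]
    by_cases hq : (q:ℕ)+1 ≤ k-1
    · rw [if_pos hq]
      have h1 := hζpow (((p:ℕ)+1) * ((q:ℕ)+1))
      have h2 := hζinvpow (((p:ℕ)+1) * ((q:ℕ)+1))
      rw [h1, h2, hdiff]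
      simp only [hM, hc, Matrix.of_apply, if_pos hq]
      rw [show 2*π*((((p:ℕ)+1) * ((q:ℕ)+1) : ℕ):ℝ)/l
          = 2*π*(((p:ℕ):ℝ)+1)*(((q:ℕ):ℝ)+1)/l by push_cast; ring]
      ring
    · rw [if_neg hq]
      simp only [hM, hc, Matrix.of_apply, if_neg hq]
      rw [hrJ ((p:ℕ)+1) (by omega) (by omega : (p:ℕ)+1 ≤ k)]
      ring
  have hmain : N = Matrix.of fun p q =>
      (fun p : Fin k => I ((p:ℕ)+1)) p *
      (Matrix.of fun p q : Fin k => c q * ((M p q : ℝ) : ℂ)) p q := by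
    ext p q
    rw [key]
    rfl
  have hdet2 : (Matrix.of fun p q : Fin k => c q * ((M p q : ℝ) : ℂ)).det
      = (∏ q : Fin k, c q) * ((M.det : ℝ) : ℂ) := by
    have := Matrix.det_mul_row c (M.map Complex.ofRealHom)
    have hmap : (Matrix.of fun p q : Fin k => c q * ((M p q : ℝ) : ℂ))
        = Matrix.of fun p q : Fin k => c q * (M.map Complex.ofRealHom) p q := rfl
    rw [hmap, this]
    congr 1
    exact (RingHom.map_det Complex.ofRealHom M).symm
  rw [hmain, Matrix.det_mul_column, hdet2]
  have hprodI : (∏ p : Fin k, I ((p:ℕ)+1)) ≠ 0 := by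
    rw [Finset.prod_ne_zero_iff]
    intro p _
    exact hI ((p:ℕ)+1) (by omega) (by have := p.isLt; omega)
  have hprodc : (∏ q : Fin k, c q) ≠ 0 := by
    rw [Finset.prod_ne_zero_iff]
    intro q _
    simp only [hc]
    by_cases hq : (q:ℕ)+1 ≤ k-1
    · rw [if_pos hq]
      exact mul_ne_zero two_ne_zero Complex.I_ne_zero
    · rw [if_neg hq]
      exact Complex.I_ne_zero
  have hMdet : M.det ≠ 0 := aux_Mdet l k hl hk2 r
    (fun p h1 h2 => hrpos p h1 h2)
  exact mul_ne_zero hprodI (mul_ne_zero hprodc (Complex.ofReal_ne_zero.mpr hMdet))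
end

section
/- Let ζ = exp(2πi/7) ∈ ℂ and let I₁, I₂, I₃, I₄, J₁, J₂, J₃, J₄ be arbitrary complex numbers. Then the determinant of the 4 × 4 matrix whose (p,q)-entry is i(ζ^{pq} − ζ^{−pq})I_p for 1 ≤ q ≤ 3 and whose (p,4)-entry is J_p (for 1 ≤ p ≤ 4) equals 7√7·(I₁I₂I₄J₃ + I₁I₂I₃J₄). -/
open Real Complex

theorem det4_aux (M : Matrix (Fin 4) (Fin 4) ℂ) : M.det =
    M 0 0 * (M 1 1 * (M 2 2 * M 3 3 - M 2 3 * M 3 2) - M 1 2 * (M 2 1 * M 3 3 - M 2 3 * M 3 1)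
      + M 1 3 * (M 2 1 * M 3 2 - M 2 2 * M 3 1))
    - M 0 1 * (M 1 0 * (M 2 2 * M 3 3 - M 2 3 * M 3 2) - M 1 2 * (M 2 0 * M 3 3 - M 2 3 * M 3 0)
      + M 1 3 * (M 2 0 * M 3 2 - M 2 2 * M 3 0))
    + M 0 2 * (M 1 0 * (M 2 1 * M 3 3 - M 2 3 * M 3 1) - M 1 1 * (M 2 0 * M 3 3 - M 2 3 * M 3 0)
      + M 1 3 * (M 2 0 * M 3 1 - M 2 1 * M 3 0))
    - M 0 3 * (M 1 0 * (M 2 1 * M 3 2 - M 2 2 * M 3 1) - M 1 1 * (M 2 0 * M 3 2 - M 2 2 * M 3 0)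
      + M 1 2 * (M 2 0 * M 3 1 - M 2 1 * M 3 0)) := by
  rw [Matrix.det_succ_row_zero]
  simp [Fin.sum_univ_succ, Matrix.det_fin_three,
    show ((2:Fin 3).succ : Fin 4) = 3 from rfl,
    show (Fin.succAbove 2 2 : Fin 4) = 3 from rfl,
    show (Fin.succAbove 1 2 : Fin 4) = 3 from rfl,
    show (Fin.castSucc 2 : Fin 4) = 2 from rfl,
    show (Fin.succAbove 3 2 : Fin 4) = 2 from rfl]
  ring

/-- With `ζ = exp(2πi/7)` and arbitrary complex numbers `I₁, …, I₄, J₁, …, J₄`, the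
determinant of the `4 × 4` matrix whose `(p,q)` entry is `i(ζ^{pq} - ζ^{-pq})I_p` for
`1 ≤ q ≤ 3` and whose `(p,4)` entry is `J_p` equals `7√7·(I₁I₂I₄J₃ + I₁I₂I₃J₄)`. -/
theorem det_l7 (ζ : ℂ) (hζ : ζ = Complex.exp (2 * Real.pi * Complex.I / 7))
    (I₁ I₂ I₃ I₄ J₁ J₂ J₃ J₄ : ℂ) :
    Matrix.det
      !![Complex.I * (ζ - ζ⁻¹) * I₁, Complex.I * (ζ ^ 2 - ζ⁻¹ ^ 2) * I₁,
           Complex.I * (ζ ^ 3 - ζ⁻¹ ^ 3) * I₁, J₁;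
         Complex.I * (ζ ^ 2 - ζ⁻¹ ^ 2) * I₂, Complex.I * (ζ ^ 4 - ζ⁻¹ ^ 4) * I₂,
           Complex.I * (ζ ^ 6 - ζ⁻¹ ^ 6) * I₂, J₂;
         Complex.I * (ζ ^ 3 - ζ⁻¹ ^ 3) * I₃, Complex.I * (ζ ^ 6 - ζ⁻¹ ^ 6) * I₃,
           Complex.I * (ζ ^ 9 - ζ⁻¹ ^ 9) * I₃, J₃;
         Complex.I * (ζ ^ 4 - ζ⁻¹ ^ 4) * I₄, Complex.I * (ζ ^ 8 - ζ⁻¹ ^ 8) * I₄,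
           Complex.I * (ζ ^ 12 - ζ⁻¹ ^ 12) * I₄, J₄]
      = 7 * (Real.sqrt 7 : ℂ) * (I₁ * I₂ * I₄ * J₃ + I₁ * I₂ * I₃ * J₄) := by
  have hprim : IsPrimitiveRoot ζ 7 := by
    rw [hζ]; simpa using Complex.isPrimitiveRoot_exp 7 (by norm_num)
  have h7 : ζ ^ 7 = 1 := hprim.pow_eq_one
  have hsum : 1 + ζ + ζ ^ 2 + ζ ^ 3 + ζ ^ 4 + ζ ^ 5 + ζ ^ 6 = 0 := by
    have h := hprim.geom_sum_eq_zero (by norm_num)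
    simp [Finset.sum_range_succ] at h
    linear_combination h
  have hmul : ζ ^ 6 * ζ = 1 := by linear_combination h7
  have hinv : ζ⁻¹ = ζ ^ 6 := inv_eq_of_mul_eq_one_left hmul
  have hi2 : ζ⁻¹ ^ 2 = ζ ^ 5 := by rw [hinv]; linear_combination (ζ ^ 5) * h7
  have hi3 : ζ⁻¹ ^ 3 = ζ ^ 4 := by
    rw [hinv]; linear_combination (ζ ^ 11 + ζ ^ 4) * h7
  have hi4 : ζ⁻¹ ^ 4 = ζ ^ 3 := by
    rw [hinv]; linear_combination (ζ ^ 17 + ζ ^ 10 + ζ ^ 3) * h7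
  have hi6 : ζ⁻¹ ^ 6 = ζ := by
    rw [hinv]; linear_combination (ζ ^ 29 + ζ ^ 22 + ζ ^ 15 + ζ ^ 8 + ζ) * h7
  have hi8 : ζ⁻¹ ^ 8 = ζ ^ 6 := by
    rw [hinv]
    linear_combination (ζ ^ 41 + ζ ^ 34 + ζ ^ 27 + ζ ^ 20 + ζ ^ 13 + ζ ^ 6) * h7
  have hi9 : ζ⁻¹ ^ 9 = ζ ^ 5 := by
    rw [hinv]
    linear_combination (ζ ^ 47 + ζ ^ 40 + ζ ^ 33 + ζ ^ 26 + ζ ^ 19 + ζ ^ 12 + ζ ^ 5) * h7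
  have hi12 : ζ⁻¹ ^ 12 = ζ ^ 2 := by
    rw [hinv]
    linear_combination (ζ ^ 65 + ζ ^ 58 + ζ ^ 51 + ζ ^ 44 + ζ ^ 37 + ζ ^ 30 + ζ ^ 23 +
      ζ ^ 16 + ζ ^ 9 + ζ ^ 2) * h7
  have p8 : ζ ^ 8 = ζ := by linear_combination ζ * h7
  have p9 : ζ ^ 9 = ζ ^ 2 := by linear_combination (ζ ^ 2) * h7
  have p12 : ζ ^ 12 = ζ ^ 5 := by linear_combination (ζ ^ 5) * h7
  -- trigonometric form of the powers of ζ
  have hcs : ∀ (k : ℕ) (x : ℝ), 2 * Real.pi * (k : ℝ) / 7 = x → ζ ^ k =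
      (Real.cos x : ℂ) + (Real.sin x : ℂ) * Complex.I := by
    intro k x hx
    rw [hζ, ← Complex.exp_nat_mul,
      show ((k : ℂ) * (2 * (Real.pi : ℂ) * Complex.I / 7)) = ((x : ℝ) : ℂ) * Complex.I by
        rw [← hx]; push_cast; ring,
      Complex.exp_mul_I, ← Complex.ofReal_cos, ← Complex.ofReal_sin]
  have h1 := hcs 1 (2 * Real.pi * 1 / 7) (by push_cast; ring)
  have h2 := hcs 2 (2 * Real.pi * 2 / 7) (by push_cast; ring)
  have h3 := hcs 3 (2 * Real.pi * 3 / 7) (by push_cast; ring)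
  have h4 := hcs 4 (2 * Real.pi * 4 / 7) (by push_cast; ring)
  have h5 := hcs 5 (2 * Real.pi * 5 / 7) (by push_cast; ring)
  have h6 := hcs 6 (2 * Real.pi * 6 / 7) (by push_cast; ring)
  rw [pow_one] at h1
  have c6 : Real.cos (2 * Real.pi * 6 / 7) = Real.cos (2 * Real.pi * 1 / 7) := by
    rw [show 2 * Real.pi * 6 / 7 = 2 * Real.pi - 2 * Real.pi * 1 / 7 by ring,
      Real.cos_sub, Real.cos_two_pi, Real.sin_two_pi]; ring
  have s6 : Real.sin (2 * Real.pi * 6 / 7) = -Real.sin (2 * Real.pi * 1 / 7) := by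
    rw [show 2 * Real.pi * 6 / 7 = 2 * Real.pi - 2 * Real.pi * 1 / 7 by ring,
      Real.sin_sub, Real.cos_two_pi, Real.sin_two_pi]; ring
  have c5 : Real.cos (2 * Real.pi * 5 / 7) = Real.cos (2 * Real.pi * 2 / 7) := by
    rw [show 2 * Real.pi * 5 / 7 = 2 * Real.pi - 2 * Real.pi * 2 / 7 by ring,
      Real.cos_sub, Real.cos_two_pi, Real.sin_two_pi]; ring
  have s5 : Real.sin (2 * Real.pi * 5 / 7) = -Real.sin (2 * Real.pi * 2 / 7) := by
    rw [show 2 * Real.pi * 5 / 7 = 2 * Real.pi - 2 * Real.pi * 2 / 7 by ring,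
      Real.sin_sub, Real.cos_two_pi, Real.sin_two_pi]; ring
  have c4 : Real.cos (2 * Real.pi * 4 / 7) = Real.cos (2 * Real.pi * 3 / 7) := by
    rw [show 2 * Real.pi * 4 / 7 = 2 * Real.pi - 2 * Real.pi * 3 / 7 by ring,
      Real.cos_sub, Real.cos_two_pi, Real.sin_two_pi]; ring
  have s4 : Real.sin (2 * Real.pi * 4 / 7) = -Real.sin (2 * Real.pi * 3 / 7) := by
    rw [show 2 * Real.pi * 4 / 7 = 2 * Real.pi - 2 * Real.pi * 3 / 7 by ring,
      Real.sin_sub, Real.cos_two_pi, Real.sin_two_pi]; ring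
  have d1 : ζ - ζ ^ 6 = 2 * (Real.sin (2 * Real.pi * 1 / 7) : ℂ) * Complex.I := by
    rw [h6, c6, s6, h1]; push_cast; ring
  have d2 : ζ ^ 2 - ζ ^ 5 = 2 * (Real.sin (2 * Real.pi * 2 / 7) : ℂ) * Complex.I := by
    rw [h5, c5, s5, h2]; push_cast; ring
  have d3 : ζ ^ 3 - ζ ^ 4 = 2 * (Real.sin (2 * Real.pi * 3 / 7) : ℂ) * Complex.I := by
    rw [h4, c4, s4, h3]; push_cast; ring
  have ht : Complex.I * (ζ - ζ ^ 6) * (ζ ^ 2 - ζ ^ 5) * (ζ ^ 3 - ζ ^ 4)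
      = ((8 * Real.sin (2 * Real.pi * 1 / 7) * Real.sin (2 * Real.pi * 2 / 7) *
          Real.sin (2 * Real.pi * 3 / 7) : ℝ) : ℂ) := by
    rw [d1, d2, d3]
    push_cast [-Complex.ofReal_sin]
    linear_combination (8 * (Real.sin (2 * Real.pi * 1 / 7) : ℂ) *
      (Real.sin (2 * Real.pi * 2 / 7) : ℂ) * (Real.sin (2 * Real.pi * 3 / 7) : ℂ) *
      (Complex.I ^ 2 - 1)) * Complex.I_sq
  have hr2 : (((8 * Real.sin (2 * Real.pi * 1 / 7) * Real.sin (2 * Real.pi * 2 / 7) *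
      Real.sin (2 * Real.pi * 3 / 7) : ℝ) : ℂ)) ^ 2 = 7 := by
    rw [← ht]
    linear_combination ((-7) + 7 * ζ - 7 * ζ ^ 7 + 7 * ζ ^ 8 - ζ ^ 12 + 3 * ζ ^ 13 -
        10 * ζ ^ 14 + 10 * ζ ^ 15 - 6 * ζ ^ 16 + 8 * ζ ^ 17 - 9 * ζ ^ 18 + 8 * ζ ^ 19 -
        6 * ζ ^ 20 + 3 * ζ ^ 21 - 3 * ζ ^ 22 + 3 * ζ ^ 23 - ζ ^ 24) * hsum +
      (((ζ - ζ ^ 6) * (ζ ^ 2 - ζ ^ 5) * (ζ ^ 3 - ζ ^ 4)) ^ 2) * Complex.I_sq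
  have hr2' : (8 * Real.sin (2 * Real.pi * 1 / 7) * Real.sin (2 * Real.pi * 2 / 7) *
      Real.sin (2 * Real.pi * 3 / 7)) ^ 2 = 7 := by exact_mod_cast hr2
  have hrnn : 0 ≤ 8 * Real.sin (2 * Real.pi * 1 / 7) * Real.sin (2 * Real.pi * 2 / 7) *
      Real.sin (2 * Real.pi * 3 / 7) := by
    have hπ := Real.pi_pos
    have t1 : 0 ≤ Real.sin (2 * Real.pi * 1 / 7) :=
      Real.sin_nonneg_of_nonneg_of_le_pi (by positivity) (by linarith)
    have t2 : 0 ≤ Real.sin (2 * Real.pi * 2 / 7) :=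
      Real.sin_nonneg_of_nonneg_of_le_pi (by positivity) (by linarith)
    have t3 : 0 ≤ Real.sin (2 * Real.pi * 3 / 7) :=
      Real.sin_nonneg_of_nonneg_of_le_pi (by positivity) (by linarith)
    positivity
  have hs : Real.sqrt 7 = 8 * Real.sin (2 * Real.pi * 1 / 7) * Real.sin (2 * Real.pi * 2 / 7) *
      Real.sin (2 * Real.pi * 3 / 7) := by
    conv_lhs => rw [← hr2']
    exact Real.sqrt_sq hrnn
  rw [hs, ← ht, hi12, hi9, hi8, hi6, hi4, hi3, hi2, p12, p9, p8, hinv]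
  have hfact : Matrix.det
      !![Complex.I * (ζ - ζ ^ 6) * I₁, Complex.I * (ζ ^ 2 - ζ ^ 5) * I₁,
           Complex.I * (ζ ^ 3 - ζ ^ 4) * I₁, J₁;
         Complex.I * (ζ ^ 2 - ζ ^ 5) * I₂, Complex.I * (ζ ^ 4 - ζ ^ 3) * I₂,
           Complex.I * (ζ ^ 6 - ζ) * I₂, J₂;
         Complex.I * (ζ ^ 3 - ζ ^ 4) * I₃, Complex.I * (ζ ^ 6 - ζ) * I₃,
           Complex.I * (ζ ^ 2 - ζ ^ 5) * I₃, J₃;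
         Complex.I * (ζ ^ 4 - ζ ^ 3) * I₄, Complex.I * (ζ - ζ ^ 6) * I₄,
           Complex.I * (ζ ^ 5 - ζ ^ 2) * I₄, J₄]
      = Complex.I ^ 3 * Matrix.det
      !![(ζ - ζ ^ 6) * I₁, (ζ ^ 2 - ζ ^ 5) * I₁, (ζ ^ 3 - ζ ^ 4) * I₁, J₁;
         (ζ ^ 2 - ζ ^ 5) * I₂, (ζ ^ 4 - ζ ^ 3) * I₂, (ζ ^ 6 - ζ) * I₂, J₂;
         (ζ ^ 3 - ζ ^ 4) * I₃, (ζ ^ 6 - ζ) * I₃, (ζ ^ 2 - ζ ^ 5) * I₃, J₃;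
         (ζ ^ 4 - ζ ^ 3) * I₄, (ζ - ζ ^ 6) * I₄, (ζ ^ 5 - ζ ^ 2) * I₄, J₄] := by
    rw [det4_aux, det4_aux]
    simp only [Matrix.cons_val', Matrix.cons_val_zero, Matrix.cons_val_one, Matrix.cons_val_two,
      Matrix.cons_val_three, Matrix.head_cons, Matrix.tail_cons, Matrix.vecHead, Matrix.vecTail,
      Matrix.empty_val', Matrix.cons_val_fin_one, Matrix.head_fin_const, Function.comp_apply,
      Matrix.of_apply, Fin.succ_zero_eq_one, Fin.succ_one_eq_two]
    norm_num
    ring_nf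
    simp only [show Complex.I ^ 3 = -Complex.I by linear_combination Complex.I * Complex.I_sq]
    ring
  rw [hfact]
  have hI3 : Complex.I ^ 3 = -Complex.I := by
    linear_combination Complex.I * Complex.I_sq
  rw [hI3, det4_aux]
  simp only [Matrix.cons_val', Matrix.cons_val_zero, Matrix.cons_val_one, Matrix.cons_val_two,
    Matrix.cons_val_three, Matrix.head_cons, Matrix.tail_cons, Matrix.vecHead, Matrix.vecTail,
    Matrix.empty_val', Matrix.cons_val_fin_one, Matrix.head_fin_const, Function.comp_apply,
    Matrix.of_apply, Fin.succ_zero_eq_one, Fin.succ_one_eq_two]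
  linear_combination (Complex.I * (ζ ^ 3 - ζ ^ 4 - 3 * ζ ^ 6 + 7 * ζ ^ 7 - 7 * ζ ^ 8 +
    3 * ζ ^ 9 + ζ ^ 11 - ζ ^ 12) * (I₁ * I₂ * I₄ * J₃ + I₁ * I₂ * I₃ * J₄)) * hsum
end

section
/- Let l ≥ 1 be an integer and t ∈ (0,1) a real number. Then the cubic polynomial q_t(x) = x³ + 9x² + 24tˡx + 16t^{2l} has exactly three real roots, which are distinct and all negative: there exist r₁ < r₂ < r₃ < 0 with q_t(rᵢ) = 0 for i = 1,2,3, q_t(x) > 0 for x ∈ (r₁, r₂), and q_t(x) < 0 for x ∈ (r₂, r₃). -/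
/-- Core version of the theorem with `s = t^l` abstracted: for `0 < s < 1`, the cubic
`x³ + 9x² + 24sx + 16s²` has three distinct negative roots with the stated sign behavior. -/
theorem cubic_three_negative_roots_aux (s : ℝ) (hs0 : 0 < s) (hs1 : s < 1) :
    ∃ r₁ r₂ r₃ : ℝ, r₁ < r₂ ∧ r₂ < r₃ ∧ r₃ < 0 ∧
      (∀ r ∈ ({r₁, r₂, r₃} : Set ℝ),
        r ^ 3 + 9 * r ^ 2 + 24 * s * r + 16 * s ^ 2 = 0) ∧
      (∀ x : ℝ, x ^ 3 + 9 * x ^ 2 + 24 * s * x + 16 * s ^ 2 = 0 →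
        x = r₁ ∨ x = r₂ ∨ x = r₃) ∧
      (∀ x ∈ Set.Ioo r₁ r₂, 0 < x ^ 3 + 9 * x ^ 2 + 24 * s * x + 16 * s ^ 2) ∧
      (∀ x ∈ Set.Ioo r₂ r₃, x ^ 3 + 9 * x ^ 2 + 24 * s * x + 16 * s ^ 2 < 0) := by
  set f : ℝ → ℝ := fun x => x ^ 3 + 9 * x ^ 2 + 24 * s * x + 16 * s ^ 2 with hf
  have hcont : Continuous f := by fun_prop
  -- sample values
  have hva : f (-9) < 0 := by simp only [hf]; nlinarith
  have hvb : 0 < f (-(4 * s)) := by simp only [hf]; nlinarith [sq_nonneg s, mul_pos hs0 hs0]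
  have hvc : f (-(4 * s / 3)) < 0 := by
    simp only [hf]; nlinarith [mul_pos (mul_pos hs0 hs0) hs0]
  have hvd : 0 < f (-s) := by simp only [hf]; nlinarith [mul_pos hs0 hs0]
  -- ordering of sample points
  have hab : (-9 : ℝ) ≤ -(4 * s) := by nlinarith
  have hbc : -(4 * s) ≤ -(4 * s / 3) := by nlinarith
  have hcd : -(4 * s / 3) ≤ -s := by nlinarith
  -- roots via IVT
  obtain ⟨r₁, hr₁mem, hr₁⟩ := intermediate_value_Ioo hab hcont.continuousOn ⟨hva, hvb⟩
  obtain ⟨r₂, hr₂mem, hr₂⟩ := intermediate_value_Ioo' hbc hcont.continuousOn ⟨hvc, hvb⟩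
  obtain ⟨r₃, hr₃mem, hr₃⟩ := intermediate_value_Ioo hcd hcont.continuousOn ⟨hvc, hvd⟩
  have h12 : r₁ < r₂ := lt_of_lt_of_le hr₁mem.2 hr₂mem.1.le
  have h23 : r₂ < r₃ := lt_of_lt_of_le hr₂mem.2 hr₃mem.1.le
  have h30 : r₃ < 0 := lt_trans hr₃mem.2 (by linarith)
  have hq1 : r₁ ^ 3 + 9 * r₁ ^ 2 + 24 * s * r₁ + 16 * s ^ 2 = 0 := hr₁
  have hq2 : r₂ ^ 3 + 9 * r₂ ^ 2 + 24 * s * r₂ + 16 * s ^ 2 = 0 := hr₂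
  have hq3 : r₃ ^ 3 + 9 * r₃ ^ 2 + 24 * s * r₃ + 16 * s ^ 2 = 0 := hr₃
  have hne12 : r₁ - r₂ ≠ 0 := sub_ne_zero.mpr (ne_of_lt h12)
  have hne23 : r₂ - r₃ ≠ 0 := sub_ne_zero.mpr (ne_of_lt h23)
  have hne13 : r₁ - r₃ ≠ 0 := sub_ne_zero.mpr (ne_of_lt (lt_trans h12 h23))
  -- symmetric function identities
  have a12 : r₁ ^ 2 + r₁ * r₂ + r₂ ^ 2 + 9 * r₁ + 9 * r₂ + 24 * s = 0 := by
    have h : (r₁ - r₂) * (r₁ ^ 2 + r₁ * r₂ + r₂ ^ 2 + 9 * r₁ + 9 * r₂ + 24 * s) = 0 := by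
      linear_combination hq1 - hq2
    exact (mul_eq_zero.mp h).resolve_left hne12
  have a23 : r₂ ^ 2 + r₂ * r₃ + r₃ ^ 2 + 9 * r₂ + 9 * r₃ + 24 * s = 0 := by
    have h : (r₂ - r₃) * (r₂ ^ 2 + r₂ * r₃ + r₃ ^ 2 + 9 * r₂ + 9 * r₃ + 24 * s) = 0 := by
      linear_combination hq2 - hq3
    exact (mul_eq_zero.mp h).resolve_left hne23
  have he1 : r₁ + r₂ + r₃ = -9 := by
    have h : (r₁ - r₃) * (r₁ + r₂ + r₃ + 9) = 0 := by linear_combination a12 - a23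
    have := (mul_eq_zero.mp h).resolve_left hne13
    linarith
  have he2 : r₁ * r₂ + r₁ * r₃ + r₂ * r₃ = 24 * s := by
    linear_combination (r₁ + r₂) * he1 - a12
  have he3 : r₁ * r₂ * r₃ = -(16 * s ^ 2) := by
    linear_combination hq1 - r₁ ^ 2 * he1 + r₁ * he2
  have key : ∀ x : ℝ, x ^ 3 + 9 * x ^ 2 + 24 * s * x + 16 * s ^ 2
      = (x - r₁) * (x - r₂) * (x - r₃) := by
    intro x
    linear_combination x ^ 2 * he1 - x * he2 + he3
  refine ⟨r₁, r₂, r₃, h12, h23, h30, ?_, ?_, ?_, ?_⟩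
  · rintro r (rfl | rfl | rfl)
    · exact hq1
    · exact hq2
    · exact hq3
  · intro x hx
    rw [key x] at hx
    rcases mul_eq_zero.mp hx with h | h
    · rcases mul_eq_zero.mp h with h | h
      · exact Or.inl (sub_eq_zero.mp h)
      · exact Or.inr (Or.inl (sub_eq_zero.mp h))
    · exact Or.inr (Or.inr (sub_eq_zero.mp h))
  · intro x hx
    rw [key x]
    have h1 : 0 < x - r₁ := by linarith [hx.1]
    have h2 : 0 < r₂ - x := by linarith [hx.2]
    have h3 : 0 < r₃ - x := by linarith [hx.2, h23]
    nlinarith [mul_pos h1 (mul_pos h2 h3)]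
  · intro x hx
    rw [key x]
    have h1 : 0 < x - r₁ := by linarith [hx.1, h12]
    have h2 : 0 < x - r₂ := by linarith [hx.1]
    have h3 : 0 < r₃ - x := by linarith [hx.2]
    nlinarith [mul_pos (mul_pos h1 h2) h3]

/-- For `l ≥ 1` and `t ∈ (0,1)`, the cubic `q_t(x) = x³ + 9x² + 24tˡx + 16t^{2l}` has exactly
three real roots, which are distinct and all negative: there are `r₁ < r₂ < r₃ < 0` with
`q_t(rᵢ) = 0`, every real root of `q_t` equals some `rᵢ`, `q_t > 0` on `(r₁, r₂)` and
`q_t < 0` on `(r₂, r₃)`. -/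
theorem cubic_three_negative_roots (l : ℕ) (hl : 1 ≤ l) (t : ℝ) (ht0 : 0 < t) (ht1 : t < 1) :
    ∃ r₁ r₂ r₃ : ℝ, r₁ < r₂ ∧ r₂ < r₃ ∧ r₃ < 0 ∧
      (∀ r ∈ ({r₁, r₂, r₃} : Set ℝ),
        r ^ 3 + 9 * r ^ 2 + 24 * t ^ l * r + 16 * t ^ (2 * l) = 0) ∧
      (∀ x : ℝ, x ^ 3 + 9 * x ^ 2 + 24 * t ^ l * x + 16 * t ^ (2 * l) = 0 →
        x = r₁ ∨ x = r₂ ∨ x = r₃) ∧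
      (∀ x ∈ Set.Ioo r₁ r₂, 0 < x ^ 3 + 9 * x ^ 2 + 24 * t ^ l * x + 16 * t ^ (2 * l)) ∧
      (∀ x ∈ Set.Ioo r₂ r₃, x ^ 3 + 9 * x ^ 2 + 24 * t ^ l * x + 16 * t ^ (2 * l) < 0) := by
  have hs0 : 0 < t ^ l := pow_pos ht0 l
  have hs1 : t ^ l < 1 := pow_lt_one₀ ht0.le ht1 (by omega)
  have hs2 : t ^ (2 * l) = (t ^ l) ^ 2 := by rw [two_mul, pow_add, sq]
  simp only [hs2]
  exact cubic_three_negative_roots_aux (t ^ l) hs0 hs1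
end

section
/- Let l ≥ 1 and j ≥ 1 be integers. For t ∈ (0,1) let r₁(t) < r₂(t) < r₃(t) denote the three real roots of q_t(x) = x³ + 9x² + 24tˡx + 16t^{2l}. Then: (i) for each t ∈ (0,1) the improper integral P(t) = ∫_{r₁(t)}^{r₂(t)} dx/√(q_t(x)) converges to a positive real number; (ii) the function t ↦ t^{j−1}·P(t) is integrable on (0,1); and (iii) ∫₀¹ t^{j−1} P(t) dt is a positive real number. -/
set_option maxHeartbeats 4000000
open MeasureTheory intervalIntegral Set


lemma cubic_vieta {s a b c : ℝ} (hab : a < b) (hbc : b < c)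
    (ha : a^3 + 9*a^2 + 24*s*a + 16*s^2 = 0)
    (hb : b^3 + 9*b^2 + 24*s*b + 16*s^2 = 0)
    (hc : c^3 + 9*c^2 + 24*s*c + 16*s^2 = 0) :
    a + b + c = -9 ∧ a*b + a*c + b*c = 24*s ∧ a*b*c = -16*s^2 := by
  have hA : a^2 + a*b + b^2 + 9*(a+b) + 24*s = 0 := by
    have h : (a - b) * (a^2 + a*b + b^2 + 9*(a+b) + 24*s) = 0 := by linear_combination ha - hb
    rcases mul_eq_zero.1 h with h | h
    · exact absurd h (sub_ne_zero.2 hab.ne)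
    · exact h
  have hB : b^2 + b*c + c^2 + 9*(b+c) + 24*s = 0 := by
    have h : (b - c) * (b^2 + b*c + c^2 + 9*(b+c) + 24*s) = 0 := by linear_combination hb - hc
    rcases mul_eq_zero.1 h with h | h
    · exact absurd h (sub_ne_zero.2 hbc.ne)
    · exact h
  have hS : a + b + c = -9 := by
    have h : (a - c) * (a + b + c + 9) = 0 := by linear_combination hA - hB
    rcases mul_eq_zero.1 h with h | h
    · exact absurd h (sub_ne_zero.2 (hab.trans hbc).ne)
    · linarith
  have h2 : a*b + a*c + b*c = 24*s := by linear_combination (a+b)*hS - hA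
  have h3 : a*b*c = -16*s^2 := by linear_combination ha + a*h2 - a^2*hS
  exact ⟨hS, h2, h3⟩

lemma cubic_factor {s a b c : ℝ} (hS : a + b + c = -9) (h2 : a*b + a*c + b*c = 24*s)
    (h3 : a*b*c = -16*s^2) (x : ℝ) :
    x^3 + 9*x^2 + 24*s*x + 16*s^2 = (x-a)*(x-b)*(x-c) := by
  linear_combination x^2*hS - x*h2 + h3

set_option maxHeartbeats 1000000 in

lemma root_facts {s a b c : ℝ} (hs0 : 0 < s) (hs1 : s < 1) (hab : a < b) (hbc : b < c)
    (hfac : ∀ x : ℝ, x^3 + 9*x^2 + 24*s*x + 16*s^2 = (x-a)*(x-b)*(x-c))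
    (hS : a + b + c = -9) :
    -9 < a ∧ a ≤ -3 ∧ -3 ≤ c ∧ c < 0 ∧ b < -(4/3)*s ∧ -(4/3)*s < c ∧
    2*Real.sqrt (1-s) ≤ b - a ∧ (3/5)*(s*Real.sqrt s) ≤ c - b ∧ 2/5 ≤ c - a := by
  have hqc : c^3 + 9*c^2 + 24*s*c + 16*s^2 = 0 := by rw [hfac]; ring
  have hc0 : c < 0 := by
    by_contra h
    push_neg at h
    nlinarith [pow_nonneg h 3, sq_nonneg c, mul_nonneg (mul_nonneg (by norm_num : (0:ℝ) ≤ 24) hs0.le) h]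
  have ha3 : a ≤ -3 := by linarith
  have hc3 : -3 ≤ c := by linarith
  have hb0 : b < 0 := hbc.trans hc0
  have ha9 : -9 < a := by linarith
  -- membership criteria
  have in_ab : ∀ x : ℝ, 0 < x^3 + 9*x^2 + 24*s*x + 16*s^2 → x ≤ -3 → a < x ∧ x < b := by
    intro x hq hx3
    rw [hfac] at hq
    have hxc : x < c := by
      rcases lt_or_eq_of_le (hx3.trans hc3) with h | h
      · exact h
      · exfalso; rw [h] at hq; simp at hq
    have hprod : (x-a)*(x-b) < 0 := by
      by_contra h
      push_neg at h
      nlinarith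
    constructor
    · by_contra h; push_neg at h; nlinarith
    · by_contra h; push_neg at h; nlinarith
  have in_bc : ∀ x : ℝ, x^3 + 9*x^2 + 24*s*x + 16*s^2 < 0 → a < x → b < x ∧ x < c := by
    intro x hq hax
    rw [hfac] at hq
    have hprod : (x-b)*(x-c) < 0 := by
      by_contra h
      push_neg at h
      nlinarith
    constructor
    · by_contra h; push_neg at h; nlinarith
    · by_contra h; push_neg at h; nlinarith
  -- the point -4s/3 lies in (b,c)
  have hstar : b < -(4/3)*s ∧ -(4/3)*s < c := by
    apply in_bc
    · have : (-(4/3)*s)^3 + 9*(-(4/3)*s)^2 + 24*s*(-(4/3)*s) + 16*s^2 = -(64/27)*s^3 := by ring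
      rw [this]
      nlinarith [pow_pos hs0 3]
    · nlinarith
  -- b - a ≥ 2√(1-s)
  set u := Real.sqrt (1-s) with hu
  have hu0 : 0 < u := Real.sqrt_pos.2 (by linarith)
  have hu2 : u^2 = 1 - s := Real.sq_sqrt (by linarith)
  have hu1 : u < 1 := by nlinarith
  have hba : 2*u ≤ b - a := by
    have h1 : a < -4 - u ∧ -4 - u < b := by
      apply in_ab
      · nlinarith [pow_pos hu0 2, sq_nonneg u, sq_nonneg (u-1), pow_pos hu0 4]
      · linarith
    have h2 : a < -4 + u ∧ -4 + u < b := by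
      apply in_ab
      · nlinarith [pow_pos hu0 2, sq_nonneg (4*u-3), pow_pos hu0 4]
      · linarith
    linarith [h1.1, h2.2]
  -- c - b ≥ (3/5) s √s
  set σ := Real.sqrt s with hσ
  have hσ0 : 0 < σ := Real.sqrt_pos.2 hs0
  have hσ2 : σ^2 = s := Real.sq_sqrt hs0.le
  have hσ1 : σ < 1 := by nlinarith
  have hcb : (3/5)*(s*σ) ≤ c - b := by
    have key : ∀ h : ℝ, 0 < h → h < 4/3*s → (-(4/3)*s + h)^3 + 9*h^2 < 0 →
        (-(4/3)*s - h)^3 + 9*h^2 < 0 → b < -(4/3)*s - h ∧ -(4/3)*s + h < c := by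
      intro h h0 hlt hq1 hq2
      have r1 : (-(4/3)*s - h)^3 + 9*(-(4/3)*s - h)^2 + 24*s*(-(4/3)*s - h) + 16*s^2
          = (-(4/3)*s - h)^3 + 9*h^2 := by ring
      have r2 : (-(4/3)*s + h)^3 + 9*(-(4/3)*s + h)^2 + 24*s*(-(4/3)*s + h) + 16*s^2
          = (-(4/3)*s + h)^3 + 9*h^2 := by ring
      have e1 := in_bc (-(4/3)*s - h) (by rw [r1]; exact hq2) (by linarith)
      have e2 := in_bc (-(4/3)*s + h) (by rw [r2]; exact hq1) (by linarith)
      exact ⟨e1.1, e2.2⟩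
    have h0 : 0 < (3/10)*(s*σ) := by positivity
    have hlt : (3/10)*(s*σ) < 4/3*s := by nlinarith
    have hh : 9*((3/10)*(s*σ))^2 = (81/100)*σ^6 := by rw [← hσ2]; ring
    have hq1 : (-(4/3)*s + (3/10)*(s*σ))^3 + 9*((3/10)*(s*σ))^2 < 0 := by
      have hcube : ((31/30)*σ^2)^3 ≤ ((4/3)*s - (3/10)*(s*σ))^3 := by
        apply pow_le_pow_left₀ (by positivity)
        nlinarith
      have hc3' : ((31/30)*σ^2)^3 = (29791/27000)*σ^6 := by ring
      have hneg : (-(4/3)*s + (3/10)*(s*σ))^3 = -(((4/3)*s - (3/10)*(s*σ))^3) := by ring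
      linarith [pow_pos hσ0 6]
    have hq2 : (-(4/3)*s - (3/10)*(s*σ))^3 + 9*((3/10)*(s*σ))^2 < 0 := by
      have hcube : ((4/3)*σ^2)^3 ≤ ((4/3)*s + (3/10)*(s*σ))^3 := by
        apply pow_le_pow_left₀ (by positivity)
        nlinarith
      have hc3' : ((4/3)*σ^2)^3 = (64/27)*σ^6 := by ring
      have hneg : (-(4/3)*s - (3/10)*(s*σ))^3 = -(((4/3)*s + (3/10)*(s*σ))^3) := by ring
      linarith [pow_pos hσ0 6]
    have := key ((3/10)*(s*σ)) h0 hlt hq1 hq2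
    linarith [this.1, this.2]
  -- c - a ≥ 2/5
  have hca : 2/5 ≤ c - a := by
    rcases le_or_gt s (15/16) with h | h
    · have : 1/4 ≤ u := by nlinarith
      linarith
    · have hss : s ≤ σ := by nlinarith
      nlinarith
  exact ⟨ha9, ha3, hc3, hc0, hstar.1, hstar.2, hba, hcb, hca⟩



lemma edge_left_int {α β r C : ℝ} (hαβ : α ≤ β) (hr : -1 < r) {f : ℝ → ℝ}
    (hm : Measurable f)
    (hb : ∀ x ∈ Set.Ioc α β, ‖f x‖ ≤ C * (x - α) ^ r) :
    IntervalIntegrable f volume α β := by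
  have hg : IntervalIntegrable (fun x => C * (x - α) ^ r) volume α β := by
    have h0 : IntervalIntegrable (fun x : ℝ => x ^ r) volume (α - α) (β - α) :=
      intervalIntegrable_rpow' hr
    simpa [sub_add_cancel] using (h0.comp_sub_right α).const_mul C
  apply hg.mono_fun' hm.aestronglyMeasurable
  rw [Set.uIoc_of_le hαβ]
  exact (ae_restrict_iff' measurableSet_Ioc).2 (Filter.Eventually.of_forall hb)

lemma edge_right_int {α β r C : ℝ} (hαβ : α ≤ β) (hr : -1 < r) {f : ℝ → ℝ}
    (hm : Measurable f)
    (hb : ∀ x ∈ Set.Ioc α β, ‖f x‖ ≤ C * (β - x) ^ r) :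
    IntervalIntegrable f volume α β := by
  have hg : IntervalIntegrable (fun x => C * (β - x) ^ r) volume α β := by
    have h0 : IntervalIntegrable (fun x : ℝ => x ^ r) volume (β - α) (β - β) :=
      intervalIntegrable_rpow' hr
    simpa [sub_sub_cancel] using (h0.comp_sub_left β).const_mul C
  apply hg.mono_fun' hm.aestronglyMeasurable
  rw [Set.uIoc_of_le hαβ]
  exact (ae_restrict_iff' measurableSet_Ioc).2 (Filter.Eventually.of_forall hb)

lemma edge_left_val {α β r C : ℝ} (hαβ : α ≤ β) (hr : -1 < r) :
    (∫ x in α..β, C * (x - α) ^ r) = C * ((β - α) ^ (r+1) / (r+1)) := by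
  rw [intervalIntegral.integral_const_mul]
  rw [intervalIntegral.integral_comp_sub_right (fun x => x ^ r) α]
  rw [integral_rpow (Or.inl hr)]
  rw [sub_self, Real.zero_rpow (by linarith : r + 1 ≠ 0)]
  ring

lemma edge_right_val {α β r C : ℝ} (hαβ : α ≤ β) (hr : -1 < r) :
    (∫ x in α..β, C * (β - x) ^ r) = C * ((β - α) ^ (r+1) / (r+1)) := by
  rw [intervalIntegral.integral_const_mul]
  rw [intervalIntegral.integral_comp_sub_left (fun x => x ^ r) β]
  rw [integral_rpow (Or.inl hr)]
  rw [sub_self, Real.zero_rpow (by linarith : r + 1 ≠ 0)]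
  ring

lemma edge_left_bound {α β r C : ℝ} (hαβ : α ≤ β) (hr : -1 < r) {f : ℝ → ℝ}
    (hi : IntervalIntegrable f volume α β)
    (hb : ∀ x ∈ Set.Icc α β, f x ≤ C * (x - α) ^ r) :
    (∫ x in α..β, f x) ≤ C * ((β - α) ^ (r+1) / (r+1)) := by
  have hg : IntervalIntegrable (fun x => C * (x - α) ^ r) volume α β := by
    have h0 : IntervalIntegrable (fun x : ℝ => x ^ r) volume (α - α) (β - α) :=
      intervalIntegrable_rpow' hr
    simpa [sub_add_cancel] using (h0.comp_sub_right α).const_mul C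
  rw [← edge_left_val hαβ hr (C := C)]
  exact intervalIntegral.integral_mono_on hαβ hi hg hb

lemma edge_right_bound {α β r C : ℝ} (hαβ : α ≤ β) (hr : -1 < r) {f : ℝ → ℝ}
    (hi : IntervalIntegrable f volume α β)
    (hb : ∀ x ∈ Set.Icc α β, f x ≤ C * (β - x) ^ r) :
    (∫ x in α..β, f x) ≤ C * ((β - α) ^ (r+1) / (r+1)) := by
  have hg : IntervalIntegrable (fun x => C * (β - x) ^ r) volume α β := by
    have h0 : IntervalIntegrable (fun x : ℝ => x ^ r) volume (β - α) (β - β) :=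
      intervalIntegrable_rpow' hr
    simpa [sub_sub_cancel] using (h0.comp_sub_left β).const_mul C
  rw [← edge_right_val hαβ hr (C := C)]
  exact intervalIntegral.integral_mono_on hαβ hi hg hb


open MeasureTheory intervalIntegral

noncomputable def ff (s : ℝ) : ℝ → ℝ := fun x => 1 / Real.sqrt (x^3 + 9*x^2 + 24*s*x + 16*s^2)

lemma ff_meas (s : ℝ) : Measurable (ff s) := by
  have h : Continuous fun x : ℝ => Real.sqrt (x^3 + 9*x^2 + 24*s*x + 16*s^2) :=
    Real.continuous_sqrt.comp (by continuity)
  unfold ff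
  simp only [one_div]
  exact h.measurable.inv

lemma ff_nonneg (s : ℝ) (x : ℝ) : 0 ≤ ff s x := by
  unfold ff; positivity

lemma wgm {u D θ : ℝ} (hu : 0 < u) (hD : 0 < D) (hθ0 : 0 ≤ θ) (hθ1 : θ ≤ 1) :
    u ^ (1-θ) * D ^ θ ≤ u + D := by
  rcases le_total u D with h | h
  · calc u ^ (1-θ) * D ^ θ ≤ D ^ (1-θ) * D ^ θ :=
          mul_le_mul_of_nonneg_right (Real.rpow_le_rpow hu.le h (by linarith))
            (Real.rpow_nonneg hD.le θ)
    _ = D := by rw [← Real.rpow_add hD]; norm_num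
    _ ≤ u + D := by linarith
  · calc u ^ (1-θ) * D ^ θ ≤ u ^ (1-θ) * u ^ θ :=
          mul_le_mul_of_nonneg_left (Real.rpow_le_rpow hD.le h hθ0)
            (Real.rpow_nonneg hu.le _)
    _ = u := by rw [← Real.rpow_add hu]; norm_num
    _ ≤ u + D := by linarith

lemma inv_sqrt_bound1 {K q y : ℝ} (hK : 0 < K) (hy : 0 < y) (h : y * K ≤ q) :
    1 / Real.sqrt q ≤ (Real.sqrt K)⁻¹ * y ^ (-(1/2) : ℝ) := by
  have h0 : 0 < y * K := by positivity
  have hsr : Real.sqrt (y*K) ≤ Real.sqrt q := Real.sqrt_le_sqrt h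
  have h1 : 0 < Real.sqrt (y*K) := Real.sqrt_pos.2 h0
  have e1 : (Real.sqrt K)⁻¹ * y ^ (-(1/2) : ℝ) = 1 / Real.sqrt (y*K) := by
    rw [Real.rpow_neg hy.le, ← Real.sqrt_eq_rpow, Real.sqrt_mul hy.le, one_div, mul_inv, mul_comm]
  rw [e1]
  exact one_div_le_one_div_of_le h1 hsr

lemma inv_sqrt_bound2 {K D q u θ : ℝ} (hK : 0 < K) (hD : 0 < D) (hu : 0 < u)
    (hθ0 : 0 < θ) (hθ1 : θ ≤ 1)
    (h : K * (u * (u + D)) ≤ q) :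
    1 / Real.sqrt q ≤ ((Real.sqrt K)⁻¹ * D ^ (-(θ/2) : ℝ)) * u ^ (θ/2 - 1) := by
  have inner : u ^ ((2-θ) : ℝ) * D ^ θ ≤ u * (u + D) := by
    have h2 : u ^ ((2-θ) : ℝ) = u * u ^ ((1-θ) : ℝ) := by
      rw [show ((2-θ) : ℝ) = 1 + (1-θ) by ring, Real.rpow_add hu, Real.rpow_one]
    rw [h2, mul_assoc]
    exact mul_le_mul_of_nonneg_left (wgm hu hD hθ0.le hθ1) hu.le
  have key : K * (u ^ ((2-θ):ℝ) * D ^ θ) ≤ q :=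
    le_trans (mul_le_mul_of_nonneg_left inner hK.le) h
  have hpos : (0:ℝ) < K * (u ^ ((2-θ):ℝ) * D ^ θ) := by positivity
  have hsr : Real.sqrt (K * (u ^ ((2-θ):ℝ) * D ^ θ)) ≤ Real.sqrt q := Real.sqrt_le_sqrt key
  have h1 : 0 < Real.sqrt (K * (u ^ ((2-θ):ℝ) * D ^ θ)) := Real.sqrt_pos.2 hpos
  have hfact : Real.sqrt (K * (u ^ ((2-θ):ℝ) * D ^ θ))
      = Real.sqrt K * (u ^ (((2-θ):ℝ)/2) * D ^ (θ/2)) := by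
    rw [Real.sqrt_mul hK.le, Real.sqrt_mul (Real.rpow_nonneg hu.le _)]
    congr 1
    congr 1
    · rw [Real.sqrt_eq_rpow, ← Real.rpow_mul hu.le,
        show ((2-θ):ℝ) * (1/2) = ((2-θ):ℝ)/2 by ring]
    · rw [Real.sqrt_eq_rpow, ← Real.rpow_mul hD.le, show θ * (1/2) = θ/2 by ring]
  have e1 : ((Real.sqrt K)⁻¹ * D ^ (-(θ/2) : ℝ)) * u ^ (θ/2 - 1)
      = 1 / (Real.sqrt K * (u ^ (((2-θ):ℝ)/2) * D ^ (θ/2))) := by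
    rw [show θ/2 - 1 = -(((2-θ):ℝ)/2) by ring, Real.rpow_neg hu.le, Real.rpow_neg hD.le,
      one_div, mul_inv, mul_inv]
    ring
  rw [e1, ← hfact]
  exact one_div_le_one_div_of_le h1 hsr




lemma core (l : ℕ) (hl : 1 ≤ l) {t a b c : ℝ} (ht0 : 0 < t) (ht1 : t < 1)
    (hab : a < b) (hbc : b < c)
    (hfac : ∀ x : ℝ, x^3 + 9*x^2 + 24*(t^l)*x + 16*(t^l)^2 = (x-a)*(x-b)*(x-c))
    (hS : a + b + c = -9) :
    IntervalIntegrable (ff (t^l)) volume a b ∧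
    (∫ x in a..b, ff (t^l) x) ≤ 5 + 30*(l:ℝ)*(t ^ (-(3/4) : ℝ) + (1-t) ^ (-(3/4) : ℝ)) := by
  set s := t^l with hsdef
  have hs0 : 0 < s := pow_pos ht0 l
  have hs1 : s < 1 := pow_lt_one₀ ht0.le ht1 (by omega)
  have hst : s ≤ t := by
    have := pow_le_pow_of_le_one ht0.le ht1.le hl
    simpa using this
  obtain ⟨ha9, ha3, hc3, hc0, hb43, h43c, hba, hcb, hca⟩ := root_facts hs0 hs1 hab hbc hfac hS
  have hb0 : b < 0 := by nlinarith [hs0]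
  set e := b - a with hedef
  set d := c - b with hddef
  set m := (a+b)/2 with hmdef
  have he : 0 < e := by simp only [hedef]; linarith
  have hd : 0 < d := by simp only [hddef]; linarith
  have he9 : e < 9 := by simp only [hedef]; linarith
  have ham : a ≤ m := by simp only [hmdef]; linarith
  have hmb : m ≤ b := by simp only [hmdef]; linarith
  have hma : m - a = e/2 := by simp only [hmdef, hedef]; ring
  have hbm : b - m = e/2 := by simp only [hmdef, hedef]; ring
  have hl1 : (1:ℝ) ≤ (l:ℝ) := by exact_mod_cast hl
  have hl0 : (0:ℝ) < (l:ℝ) := by linarith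
  set θ : ℝ := (l:ℝ)⁻¹ with hθdef
  have hθ0 : 0 < θ := by positivity
  have hθ1 : θ ≤ 1 := by
    rw [hθdef]
    exact inv_le_one_of_one_le₀ hl1
  have hqa : a^3 + 9*a^2 + 24*s*a + 16*s^2 = 0 := by rw [hfac]; ring
  have hqb : b^3 + 9*b^2 + 24*s*b + 16*s^2 = 0 := by rw [hfac]; ring
  set CL : ℝ := (Real.sqrt (e/10))⁻¹ with hCLdef
  set CR : ℝ := (Real.sqrt (e/2))⁻¹ * d ^ (-(θ/2) : ℝ) with hCRdef
  -- left pointwise bound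
  have hIccL : ∀ x ∈ Set.Icc a m, ff s x ≤ CL * (x - a) ^ (-(1/2) : ℝ) := by
    rintro x ⟨hax, hxm⟩
    rcases eq_or_lt_of_le hax with h | h
    · rw [← h]
      simp only [ff, hqa, Real.sqrt_zero, div_zero, sub_self,
        Real.zero_rpow (by norm_num : (-(1/2) : ℝ) ≠ 0), mul_zero, le_refl]
    · have h2 : e/2 ≤ b - x := by
        have : x ≤ (a+b)/2 := hxm
        simp only [hedef]; linarith
      have h3 : 1/5 ≤ c - x := by
        have : x ≤ (a+b)/2 := hxm
        linarith
      have h4 : e/10 ≤ (b-x)*(c-x) := by nlinarith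
      have harg : (x - a) * (e/10) ≤ x^3 + 9*x^2 + 24*s*x + 16*s^2 := by
        rw [hfac x]
        have h5 := mul_le_mul_of_nonneg_left h4 (le_of_lt (sub_pos.2 h))
        have hr : (x-a)*((b-x)*(c-x)) = (x-a)*(x-b)*(x-c) := by ring
        linarith
      exact inv_sqrt_bound1 (by positivity) (sub_pos.2 h) harg
  -- right pointwise bound
  have hIccR : ∀ x ∈ Set.Icc m b, ff s x ≤ CR * (b - x) ^ (θ/2 - 1 : ℝ) := by
    rintro x ⟨hmx, hxb⟩
    rcases eq_or_lt_of_le hxb with h | h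
    · rw [h]
      simp only [ff, hqb, Real.sqrt_zero, div_zero, sub_self,
        Real.zero_rpow (ne_of_lt (by linarith : (θ/2 - 1 : ℝ) < 0)), mul_zero, le_refl]
    · have h2 : e/2 ≤ x - a := by
        have : (a+b)/2 ≤ x := hmx
        simp only [hedef]; linarith
      have harg : (e/2) * ((b - x) * ((b - x) + d)) ≤ x^3 + 9*x^2 + 24*s*x + 16*s^2 := by
        rw [hfac x]
        have hz : (0:ℝ) ≤ (b - x) * ((b - x) + d) := by
          have : 0 < b - x := sub_pos.2 h
          positivity
        have h5 := mul_le_mul_of_nonneg_right h2 hz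
        have hr : (x-a)*((b - x) * ((b - x) + d)) = (x-a)*(x-b)*(x-c) := by
          simp only [hddef]; ring
        linarith
      exact inv_sqrt_bound2 (by positivity) hd (sub_pos.2 h) hθ0 hθ1 harg
  -- integrability
  have hiL : IntervalIntegrable (ff s) volume a m := by
    apply edge_left_int ham (by norm_num : (-1:ℝ) < -(1/2)) (ff_meas s)
    intro x hx
    rw [Real.norm_of_nonneg (ff_nonneg s x)]
    exact hIccL x (Set.Ioc_subset_Icc_self hx)
  have hiR : IntervalIntegrable (ff s) volume m b := by
    apply edge_right_int hmb (by linarith : (-1:ℝ) < θ/2 - 1) (ff_meas s)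
    intro x hx
    rw [Real.norm_of_nonneg (ff_nonneg s x)]
    exact hIccR x (Set.Ioc_subset_Icc_self hx)
  have hi : IntervalIntegrable (ff s) volume a b := hiL.trans hiR
  refine ⟨hi, ?_⟩
  -- value bounds
  have hvL : (∫ x in a..m, ff s x) ≤ 5 := by
    have h1 := edge_left_bound ham (by norm_num : (-1:ℝ) < -(1/2)) hiL hIccL
    rw [hma] at h1
    have hsp : 0 < Real.sqrt (e/10) := Real.sqrt_pos.2 (by positivity)
    have h2s5 : 2 * Real.sqrt 5 ≤ 5 := by
      nlinarith [Real.sq_sqrt (by norm_num : (0:ℝ) ≤ 5), Real.sqrt_nonneg 5]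
    have h51 : Real.sqrt (e/2) = Real.sqrt 5 * Real.sqrt (e/10) := by
      rw [show e/2 = 5*(e/10) by ring, Real.sqrt_mul (by norm_num : (0:ℝ) ≤ 5)]
    have heq : CL * ((e/2) ^ ((-(1/2) : ℝ)+1) / ((-(1/2) : ℝ)+1)) = 2 * Real.sqrt 5 := by
      rw [show ((-(1/2) : ℝ)+1) = (1/2 : ℝ) by norm_num, ← Real.sqrt_eq_rpow, h51, hCLdef]
      field_simp
    calc (∫ x in a..m, ff s x) ≤ CL * ((e/2) ^ ((-(1/2) : ℝ)+1) / ((-(1/2) : ℝ)+1)) := h1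
      _ = 2 * Real.sqrt 5 := heq
      _ ≤ 5 := h2s5
  have hvR : (∫ x in m..b, ff s x) ≤ 30*(l:ℝ)*(t ^ (-(3/4) : ℝ) + (1-t) ^ (-(3/4) : ℝ)) := by
    have h1 := edge_right_bound hmb (by linarith : (-1:ℝ) < θ/2 - 1) hiR hIccR
    rw [hbm, show (θ/2 - 1 : ℝ) + 1 = θ/2 by ring] at h1
    -- A1
    have hw0 : (0:ℝ) < 1 - s := by linarith
    have hsq2 : (0:ℝ) < Real.sqrt (e/2) := Real.sqrt_pos.2 (by positivity)
    have hA1 : (Real.sqrt (e/2))⁻¹ ≤ (1-t) ^ (-(1/4) : ℝ) := by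
      have hq14 : Real.sqrt (Real.sqrt (1-s)) = (1-s) ^ ((1/4) : ℝ) := by
        rw [Real.sqrt_eq_rpow, Real.sqrt_eq_rpow, ← Real.rpow_mul hw0.le]
        norm_num
      have h14 : (1-t) ^ ((1/4):ℝ) ≤ Real.sqrt (e/2) := by
        calc (1-t) ^ ((1/4):ℝ) ≤ (1-s) ^ ((1/4):ℝ) :=
              Real.rpow_le_rpow (by linarith) (by linarith) (by norm_num)
          _ = Real.sqrt (Real.sqrt (1-s)) := hq14.symm
          _ ≤ Real.sqrt (e/2) := Real.sqrt_le_sqrt (by linarith)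
      rw [Real.rpow_neg (by linarith : (0:ℝ) ≤ 1-t)]
      exact inv_anti₀ (Real.rpow_pos_of_pos (by linarith) _) h14
    -- A2
    have hA2 : d ^ (-(θ/2) : ℝ) ≤ (5/3) * t ^ (-(3/4) : ℝ) := by
      have hs32 : s * Real.sqrt s = t ^ (((l:ℝ))*(3/2)) := by
        rw [show s * Real.sqrt s = s ^ ((3:ℝ)/2) by
          rw [show (3:ℝ)/2 = 1 + 1/2 by norm_num, Real.rpow_one_add' hs0.le (by norm_num),
            ← Real.sqrt_eq_rpow]]
        rw [hsdef, ← Real.rpow_natCast t l, ← Real.rpow_mul ht0.le]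
      have hbase : (0:ℝ) < (3/5) * t ^ (((l:ℝ))*(3/2)) := by positivity
      have hdb : (3/5) * t ^ (((l:ℝ))*(3/2)) ≤ d := by rw [← hs32]; exact hcb
      have h2 : d ^ (-(θ/2) : ℝ) ≤ ((3/5) * t ^ (((l:ℝ))*(3/2))) ^ (-(θ/2) : ℝ) :=
        Real.rpow_le_rpow_of_nonpos hbase hdb (by linarith : -(θ/2 : ℝ) ≤ 0)
      have h3 : ((3/5) * t ^ (((l:ℝ))*(3/2))) ^ (-(θ/2) : ℝ)
          = (3/5 : ℝ) ^ (-(θ/2) : ℝ) * (t ^ (((l:ℝ))*(3/2))) ^ (-(θ/2) : ℝ) :=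
        Real.mul_rpow (by norm_num) (Real.rpow_nonneg ht0.le _)
      have h4 : (t ^ (((l:ℝ))*(3/2))) ^ (-(θ/2) : ℝ) = t ^ (-(3/4) : ℝ) := by
        rw [← Real.rpow_mul ht0.le]
        congr 1
        rw [hθdef]
        field_simp
        ring
      have h5 : (3/5 : ℝ) ^ (-(θ/2) : ℝ) ≤ 5/3 := by
        have : (3/5 : ℝ) ^ (-(θ/2) : ℝ) = (5/3 : ℝ) ^ ((θ/2) : ℝ) := by
          rw [show (3/5 : ℝ) = (5/3 : ℝ)⁻¹ by norm_num,
            Real.inv_rpow (by norm_num : (0:ℝ) ≤ 5/3), ← Real.rpow_neg (by norm_num), neg_neg]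
        rw [this]
        calc (5/3 : ℝ) ^ ((θ/2) : ℝ) ≤ (5/3 : ℝ) ^ ((1:ℝ)) :=
              Real.rpow_le_rpow_of_exponent_le (by norm_num) (by linarith)
          _ = 5/3 := Real.rpow_one _
      calc d ^ (-(θ/2) : ℝ) ≤ (3/5 : ℝ) ^ (-(θ/2) : ℝ) * t ^ (-(3/4) : ℝ) := by
            rw [← h4]; rw [h3] at h2; exact h2
        _ ≤ (5/3) * t ^ (-(3/4) : ℝ) :=
            mul_le_mul_of_nonneg_right h5 (Real.rpow_nonneg ht0.le _)
    -- A3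
    have hA3 : (e/2) ^ (θ/2 : ℝ) ≤ 9/2 := by
      rcases le_or_gt (e/2) 1 with h | h
      · calc (e/2) ^ (θ/2 : ℝ) ≤ 1 := Real.rpow_le_one (by positivity) h (by positivity)
          _ ≤ 9/2 := by norm_num
      · calc (e/2) ^ (θ/2 : ℝ) ≤ (e/2) ^ ((1:ℝ)) :=
              Real.rpow_le_rpow_of_exponent_le h.le (by linarith)
          _ = e/2 := Real.rpow_one _
          _ ≤ 9/2 := by linarith
    have hA4 : ((θ/2 : ℝ))⁻¹ = 2*(l:ℝ) := by
      rw [hθdef]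
      field_simp
    have hchain : CR * ((e/2) ^ (θ/2 : ℝ) / (θ/2)) ≤ 15*(l:ℝ)*(t ^ (-(3/4):ℝ) * (1-t) ^ (-(1/4):ℝ)) := by
      calc CR * ((e/2) ^ (θ/2 : ℝ) / (θ/2))
          = (Real.sqrt (e/2))⁻¹ * d ^ (-(θ/2) : ℝ) * ((e/2) ^ (θ/2:ℝ) * (θ/2)⁻¹) := by
            rw [hCRdef]; ring
        _ = (Real.sqrt (e/2))⁻¹ * d ^ (-(θ/2) : ℝ) * ((e/2) ^ (θ/2:ℝ) * (2*(l:ℝ))) := by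
            rw [hA4]
        _ ≤ (1-t) ^ (-(1/4):ℝ) * ((5/3) * t ^ (-(3/4):ℝ)) * ((9/2) * (2*(l:ℝ))) := by
            have n1 : (0:ℝ) ≤ (Real.sqrt (e/2))⁻¹ := by positivity
            have n2 : (0:ℝ) ≤ d ^ (-(θ/2) : ℝ) := Real.rpow_nonneg hd.le _
            have n3 : (0:ℝ) ≤ (e/2) ^ (θ/2:ℝ) := Real.rpow_nonneg (by positivity) _
            have n4 : (0:ℝ) ≤ 2*(l:ℝ) := by positivity
            have n5 : (0:ℝ) ≤ (1-t) ^ (-(1/4):ℝ) := Real.rpow_nonneg (by linarith) _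
            have n6 : (0:ℝ) ≤ (5/3) * t ^ (-(3/4):ℝ) := by positivity
            apply mul_le_mul
            · exact mul_le_mul hA1 hA2 n2 n5
            · exact mul_le_mul_of_nonneg_right hA3 n4
            · positivity
            · positivity
        _ = 15*(l:ℝ)*(t ^ (-(3/4):ℝ) * (1-t) ^ (-(1/4):ℝ)) := by ring
    have hsplit : 15*(l:ℝ)*(t ^ (-(3/4):ℝ) * (1-t) ^ (-(1/4):ℝ))
        ≤ 30*(l:ℝ)*(t ^ (-(3/4) : ℝ) + (1-t) ^ (-(3/4) : ℝ)) := by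
      have nX : (0:ℝ) ≤ t ^ (-(3/4):ℝ) := Real.rpow_nonneg ht0.le _
      have nY : (0:ℝ) ≤ (1-t) ^ (-(3/4):ℝ) := Real.rpow_nonneg (by linarith) _
      have nW : (0:ℝ) ≤ (1-t) ^ (-(1/4):ℝ) := Real.rpow_nonneg (by linarith) _
      rcases le_or_gt t (1/2) with h | h
      · have hw : (1-t) ^ (-(1/4):ℝ) ≤ 2 := by
          calc (1-t) ^ (-(1/4):ℝ) ≤ (1/2 : ℝ) ^ (-(1/4):ℝ) :=
                Real.rpow_le_rpow_of_nonpos (by norm_num) (by linarith) (by norm_num)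
            _ = (2:ℝ) ^ ((1/4):ℝ) := by
                rw [show (1/2 : ℝ) = (2:ℝ)⁻¹ by norm_num,
                  Real.inv_rpow (by norm_num), ← Real.rpow_neg (by norm_num), neg_neg]
            _ ≤ (2:ℝ) ^ ((1:ℝ)) := Real.rpow_le_rpow_of_exponent_le one_le_two (by norm_num)
            _ = 2 := Real.rpow_one _
        have k1 : 15*(l:ℝ)*(t ^ (-(3/4):ℝ) * (1-t) ^ (-(1/4):ℝ))
            ≤ 15*(l:ℝ)*(t ^ (-(3/4):ℝ) * 2) :=
          mul_le_mul_of_nonneg_left (mul_le_mul_of_nonneg_left hw nX)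
            (by positivity : (0:ℝ) ≤ 15*(l:ℝ))
        have k2 : (0:ℝ) ≤ 30*(l:ℝ)*(1-t) ^ (-(3/4):ℝ) := mul_nonneg (by positivity) nY
        linarith [k1, k2]
      · have hw1 : t ^ (-(3/4):ℝ) ≤ 2 := by
          calc t ^ (-(3/4):ℝ) ≤ (1/2 : ℝ) ^ (-(3/4):ℝ) :=
                Real.rpow_le_rpow_of_nonpos (by norm_num) (by linarith) (by norm_num)
            _ = (2:ℝ) ^ ((3/4):ℝ) := by
                rw [show (1/2 : ℝ) = (2:ℝ)⁻¹ by norm_num,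
                  Real.inv_rpow (by norm_num), ← Real.rpow_neg (by norm_num), neg_neg]
            _ ≤ (2:ℝ) ^ ((1:ℝ)) := Real.rpow_le_rpow_of_exponent_le one_le_two (by norm_num)
            _ = 2 := Real.rpow_one _
        have hw2 : (1-t) ^ (-(1/4):ℝ) ≤ (1-t) ^ (-(3/4):ℝ) :=
          Real.rpow_le_rpow_of_exponent_ge (by linarith) (by linarith) (by norm_num)
        have hprod : t ^ (-(3/4):ℝ) * (1-t) ^ (-(1/4):ℝ) ≤ 2 * (1-t) ^ (-(3/4):ℝ) :=
          mul_le_mul hw1 hw2 nW (by norm_num)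
        have k1 := mul_le_mul_of_nonneg_left hprod (by positivity : (0:ℝ) ≤ 15*(l:ℝ))
        have k2 : (0:ℝ) ≤ 30*(l:ℝ)*t ^ (-(3/4):ℝ) := mul_nonneg (by positivity) nX
        linarith [k1, k2]
    calc (∫ x in m..b, ff s x) ≤ CR * ((e/2) ^ (θ/2 : ℝ) / (θ/2)) := h1
      _ ≤ 15*(l:ℝ)*(t ^ (-(3/4):ℝ) * (1-t) ^ (-(1/4):ℝ)) := hchain
      _ ≤ 30*(l:ℝ)*(t ^ (-(3/4) : ℝ) + (1-t) ^ (-(3/4) : ℝ)) := hsplit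
  have hsum := intervalIntegral.integral_add_adjacent_intervals hiL hiR
  calc (∫ x in a..b, ff s x) = (∫ x in a..m, ff s x) + (∫ x in m..b, ff s x) := hsum.symm
    _ ≤ 5 + 30*(l:ℝ)*(t ^ (-(3/4) : ℝ) + (1-t) ^ (-(3/4) : ℝ)) := add_le_add hvL hvR

noncomputable def FF (l : ℕ) : ℝ × ℝ → ℝ := fun p =>
  Set.indicator
    {q : ℝ × ℝ | 0 < q.2^3 + 9*q.2^2 + 24*(q.1^l)*q.2 + 16*(q.1^l)^2 ∧ q.2 < -(4/3)*q.1^l}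
    (fun q => 1 / Real.sqrt (q.2^3 + 9*q.2^2 + 24*(q.1^l)*q.2 + 16*(q.1^l)^2)) p

lemma FF_meas (l : ℕ) : Measurable (FF l) := by
  unfold FF
  apply Measurable.indicator
  · have hc : Continuous fun q : ℝ × ℝ =>
        Real.sqrt (q.2^3 + 9*q.2^2 + 24*(q.1^l)*q.2 + 16*(q.1^l)^2) := by
      apply Real.continuous_sqrt.comp
      continuity
    simp only [one_div]
    exact hc.measurable.inv
  · have hpoly : Continuous fun q : ℝ × ℝ => q.2^3 + 9*q.2^2 + 24*(q.1^l)*q.2 + 16*(q.1^l)^2 := by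
      continuity
    have h1 : MeasurableSet {q : ℝ × ℝ | 0 < q.2^3 + 9*q.2^2 + 24*(q.1^l)*q.2 + 16*(q.1^l)^2} :=
      measurableSet_lt measurable_const hpoly.measurable
    have h2 : MeasurableSet {q : ℝ × ℝ | q.2 < -(4/3)*q.1^l} :=
      measurableSet_lt measurable_snd (by continuity : Continuous fun q : ℝ × ℝ => -(4/3)*q.1^l).measurable
    exact h1.inter h2

/-- Let `l, j ≥ 1` and for `t ∈ (0,1)` let `r₁(t) < r₂(t) < r₃(t)` be the three real roots of
`q_t(x) = x³ + 9x² + 24tˡx + 16t^{2l}`.  Then (i) the improper integral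
`P(t) = ∫_{r₁(t)}^{r₂(t)} dx/√(q_t(x))` converges to a positive real number for each
`t ∈ (0,1)`; (ii) `t ↦ t^{j-1} P(t)` is integrable on `(0,1)`; and (iii)
`∫₀¹ t^{j-1} P(t) dt > 0`. -/
theorem period_integral_Delta_pos (l j : ℕ) (hl : 1 ≤ l) (hj : 1 ≤ j)
    (r₁ r₂ r₃ : ℝ → ℝ)
    (hlt : ∀ t ∈ Set.Ioo (0 : ℝ) 1, r₁ t < r₂ t ∧ r₂ t < r₃ t)
    (hroot : ∀ t ∈ Set.Ioo (0 : ℝ) 1, ∀ r ∈ ({r₁ t, r₂ t, r₃ t} : Set ℝ),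
      r ^ 3 + 9 * r ^ 2 + 24 * t ^ l * r + 16 * t ^ (2 * l) = 0)
    (hall : ∀ t ∈ Set.Ioo (0 : ℝ) 1, ∀ x : ℝ,
      x ^ 3 + 9 * x ^ 2 + 24 * t ^ l * x + 16 * t ^ (2 * l) = 0 →
        x = r₁ t ∨ x = r₂ t ∨ x = r₃ t)
    (P : ℝ → ℝ)
    (hP : ∀ t, P t = ∫ x in (r₁ t)..(r₂ t),
      1 / Real.sqrt (x ^ 3 + 9 * x ^ 2 + 24 * t ^ l * x + 16 * t ^ (2 * l))) :
    (∀ t ∈ Set.Ioo (0 : ℝ) 1,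
      IntervalIntegrable
        (fun x => 1 / Real.sqrt (x ^ 3 + 9 * x ^ 2 + 24 * t ^ l * x + 16 * t ^ (2 * l)))
        volume (r₁ t) (r₂ t) ∧ 0 < P t) ∧
    IntegrableOn (fun t => t ^ (j - 1) * P t) (Set.Ioo (0 : ℝ) 1) volume ∧
    0 < ∫ t in Set.Ioo (0 : ℝ) 1, t ^ (j - 1) * P t := by
  have hmain : ∀ t ∈ Set.Ioo (0:ℝ) 1,
      IntervalIntegrable
        (fun x => 1 / Real.sqrt (x ^ 3 + 9 * x ^ 2 + 24 * t ^ l * x + 16 * t ^ (2 * l)))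
        volume (r₁ t) (r₂ t)
      ∧ 0 < P t
      ∧ P t ≤ 5 + 30*(l:ℝ)*(t ^ (-(3/4) : ℝ) + (1-t) ^ (-(3/4) : ℝ))
      ∧ P t = ∫ x, FF l (t, x) := by
    rintro t ⟨ht0, ht1⟩
    obtain ⟨hab, hbc⟩ := hlt t ⟨ht0, ht1⟩
    set a := r₁ t with hadef
    set b := r₂ t with hbdef
    set c := r₃ t with hcdef
    have hpow : t ^ (2*l) = (t^l)^2 := by rw [two_mul, pow_add, sq]
    have hfe : (fun x => 1 / Real.sqrt (x ^ 3 + 9 * x ^ 2 + 24 * t ^ l * x + 16 * t ^ (2 * l)))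
        = ff (t^l) := by
      funext x
      simp only [ff, hpow]
    have ha : a^3 + 9*a^2 + 24*(t^l)*a + 16*(t^l)^2 = 0 := by
      have h := hroot t ⟨ht0, ht1⟩ a (by simp [hadef])
      rw [hpow] at h
      linarith
    have hb : b^3 + 9*b^2 + 24*(t^l)*b + 16*(t^l)^2 = 0 := by
      have h := hroot t ⟨ht0, ht1⟩ b (by simp [hbdef])
      rw [hpow] at h
      linarith
    have hc : c^3 + 9*c^2 + 24*(t^l)*c + 16*(t^l)^2 = 0 := by
      have h := hroot t ⟨ht0, ht1⟩ c (by simp [hcdef])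
      rw [hpow] at h
      linarith
    obtain ⟨hS, h2, h3⟩ := cubic_vieta hab hbc ha hb hc
    have hfac := fun x => cubic_factor (s := t^l) hS h2 h3 x
    have hcore := core l hl ht0 ht1 hab hbc hfac hS
    have hs0 : 0 < t^l := pow_pos ht0 l
    have hs1 : t^l < 1 := pow_lt_one₀ ht0.le ht1 (by omega)
    obtain ⟨ha9, ha3, hc3, hc0, hb43, h43c, _, _, _⟩ := root_facts hs0 hs1 hab hbc hfac hS
    have hqpos : ∀ x ∈ Set.Ioo a b, 0 < x^3 + 9*x^2 + 24*(t^l)*x + 16*(t^l)^2 := by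
      rintro x ⟨hx1, hx2⟩
      rw [hfac x]
      have e1 : 0 < (x-a)*((b-x)*(c-x)) :=
        mul_pos (sub_pos.2 hx1) (mul_pos (sub_pos.2 hx2) (sub_pos.2 (hx2.trans hbc)))
      have e2 : (x-a)*((b-x)*(c-x)) = (x-a)*(x-b)*(x-c) := by ring
      linarith
    have hmem : ∀ x : ℝ,
        (0 < x^3 + 9*x^2 + 24*(t^l)*x + 16*(t^l)^2 ∧ x < -(4/3)*t^l) ↔ x ∈ Set.Ioo a b := by
      intro x
      constructor
      · rintro ⟨h1, hx2⟩
        have hxc : x < c := by linarith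
        rw [hfac x] at h1
        have hprod : (x-a)*(x-b) < 0 := by
          by_contra hcon
          push_neg at hcon
          have := mul_nonpos_of_nonneg_of_nonpos hcon (by linarith : x - c ≤ 0)
          nlinarith
        constructor
        · by_contra hcon
          push_neg at hcon
          have h4 : (0:ℝ) ≤ (a-x)*(b-x) :=
            mul_nonneg (by linarith) (by linarith)
          nlinarith
        · by_contra hcon
          push_neg at hcon
          have h4 : (0:ℝ) ≤ (x-a)*(x-b) :=
            mul_nonneg (by linarith) (by linarith)
          linarith
      · intro hx
        exact ⟨hqpos x hx, by linarith [hx.2, hb43]⟩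
    have hPr : P t = ∫ x, FF l (t, x) := by
      rw [hP t, hfe, intervalIntegral.integral_of_le hab.le,
        MeasureTheory.integral_Ioc_eq_integral_Ioo,
        ← MeasureTheory.integral_indicator measurableSet_Ioo]
      congr 1
      funext x
      simp only [FF]
      by_cases hx : x ∈ Set.Ioo a b
      · rw [Set.indicator_of_mem hx, Set.indicator_of_mem (by exact (hmem x).2 hx)]
        simp only [ff]
      · have hnot : (t, x) ∉ {q : ℝ × ℝ |
            0 < q.2^3 + 9*q.2^2 + 24*(q.1^l)*q.2 + 16*(q.1^l)^2 ∧ q.2 < -(4/3)*q.1^l} := by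
          intro hcon
          exact hx ((hmem x).1 hcon)
        rw [Set.indicator_of_notMem hx, Set.indicator_of_notMem hnot]
    have hpos : 0 < P t := by
      rw [hP t]
      have hi := hcore.1
      rw [← hfe] at hi
      apply intervalIntegral.intervalIntegral_pos_of_pos_on hi ?_ hab
      intro x hx
      have hq := hqpos x hx
      have h0 : 0 < Real.sqrt (x ^ 3 + 9 * x ^ 2 + 24 * t ^ l * x + 16 * t ^ (2 * l)) := by
        apply Real.sqrt_pos.2
        rw [hpow]
        exact hq
      exact one_div_pos.2 h0
    refine ⟨by rw [hfe]; exact hcore.1, hpos, by rw [hP t, hfe]; exact hcore.2, hPr⟩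
  have hG : IntegrableOn
      (fun t : ℝ => 5 + 30*(l:ℝ)*(t ^ (-(3/4) : ℝ) + (1-t) ^ (-(3/4) : ℝ)))
      (Set.Ioo (0:ℝ) 1) volume := by
    apply Integrable.add
    · exact integrableOn_const measure_Ioo_lt_top.ne
    · apply Integrable.const_mul
      apply Integrable.add
      · have h := intervalIntegral.intervalIntegrable_rpow'
          (a := 0) (b := 1) (by norm_num : (-1:ℝ) < -(3/4))
        exact ((intervalIntegrable_iff_integrableOn_Ioc_of_le zero_le_one).1 h).mono_set
          Set.Ioo_subset_Ioc_self
      · have h := (intervalIntegral.intervalIntegrable_rpow'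
          (a := 0) (b := 1) (by norm_num : (-1:ℝ) < -(3/4))).comp_sub_left 1
        have h2 : IntervalIntegrable (fun x : ℝ => (1 - x) ^ (-(3/4) : ℝ)) volume 0 1 := by
          have := h.symm
          norm_num at this
          exact this
        exact ((intervalIntegrable_iff_integrableOn_Ioc_of_le zero_le_one).1 h2).mono_set
          Set.Ioo_subset_Ioc_self
  have hMeas : AEStronglyMeasurable (fun t => t ^ (j-1) * P t)
      (volume.restrict (Set.Ioo (0:ℝ) 1)) := by
    have h1 : StronglyMeasurable (fun t : ℝ => ∫ x, FF l (t, x)) :=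
      (FF_meas l).stronglyMeasurable.integral_prod_right'
    have h2 : StronglyMeasurable (fun t : ℝ => t ^ (j-1) * ∫ x, FF l (t, x)) :=
      ((continuous_pow (j-1)).stronglyMeasurable).mul h1
    apply h2.aestronglyMeasurable.congr
    apply (ae_restrict_iff' measurableSet_Ioo).2
    refine Filter.Eventually.of_forall fun t ht => ?_
    show t ^ (j-1) * (∫ x, FF l (t, x)) = t ^ (j-1) * P t
    rw [(hmain t ht).2.2.2]
  have hInt : IntegrableOn (fun t => t ^ (j-1) * P t) (Set.Ioo (0:ℝ) 1) volume := by
    apply Integrable.mono' hG hMeas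
    apply (ae_restrict_iff' measurableSet_Ioo).2
    refine Filter.Eventually.of_forall fun t ht => ?_
    obtain ⟨ht0, ht1⟩ := ht
    obtain ⟨_, hpos, hbound, _⟩ := hmain t ⟨ht0, ht1⟩
    rw [Real.norm_of_nonneg (mul_nonneg (pow_nonneg ht0.le _) hpos.le)]
    have h1 : t ^ (j-1) * P t ≤ 1 * P t :=
      mul_le_mul_of_nonneg_right (pow_le_one₀ ht0.le ht1.le) hpos.le
    linarith
  refine ⟨fun t ht => ⟨(hmain t ht).1, (hmain t ht).2.1⟩, hInt, ?_⟩
  have hnn : 0 ≤ᵐ[volume.restrict (Set.Ioo (0:ℝ) 1)] fun t => t ^ (j-1) * P t := by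
    apply (ae_restrict_iff' measurableSet_Ioo).2
    exact Filter.Eventually.of_forall fun t ht =>
      mul_nonneg (pow_nonneg ht.1.le _) (hmain t ht).2.1.le
  apply (MeasureTheory.setIntegral_pos_iff_support_of_nonneg_ae hnn hInt).2
  have hsub : Set.Ioo (0:ℝ) 1 ⊆
      Function.support (fun t => t ^ (j-1) * P t) ∩ Set.Ioo 0 1 := by
    intro t ht
    refine ⟨?_, ht⟩
    have h1 := (hmain t ht).2.1
    have h2 : 0 < t ^ (j-1) := pow_pos ht.1 _
    exact ne_of_gt (mul_pos h2 h1)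
  refine lt_of_lt_of_le ?_ (measure_mono hsub)
  rw [Real.volume_Ioo]
  norm_num
end

section
/- Let l ≥ 1 and j ≥ 1 be integers. For t ∈ (0,1) let r₁(t) < r₂(t) < r₃(t) denote the three real roots of q_t(x) = x³ + 9x² + 24tˡx + 16t^{2l}. Then: (i) for each t ∈ (0,1) the improper integral Q(t) = ∫_{r₂(t)}^{r₃(t)} dx/√(−q_t(x)) converges to a positive real number; (ii) the function t ↦ t^{j−1}·Q(t) is integrable on (0,1); and (iii) ∫₀¹ t^{j−1} Q(t) dt is a positive real number. -/
open MeasureTheory intervalIntegral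


lemma between_of_mul_neg {b c x : ℝ} (hbc : b < c) (h : (x - b) * (x - c) < 0) :
    b < x ∧ x < c := by
  rcases mul_neg_iff.mp h with ⟨h1, h2⟩ | ⟨h1, h2⟩
  · constructor <;> nlinarith
  · constructor <;> nlinarith

lemma key_alg (s a b c : ℝ) (hs0 : 0 < s) (hs1 : s < 1) (hab : a < b) (hbc : b < c)
    (ha : a ^ 3 + 9 * a ^ 2 + 24 * s * a + 16 * s ^ 2 = 0)
    (hb : b ^ 3 + 9 * b ^ 2 + 24 * s * b + 16 * s ^ 2 = 0)
    (hc : c ^ 3 + 9 * c ^ 2 + 24 * s * c + 16 * s ^ 2 = 0) :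
    (∀ x : ℝ, x ^ 3 + 9 * x ^ 2 + 24 * s * x + 16 * s ^ 2 = (x - a) * ((x - b) * (x - c)))
    ∧ a < -4 ∧ -4 < b ∧ c < 0 ∧ Real.sqrt (1 - s) < b - a := by
  have hab' : a - b ≠ 0 := sub_ne_zero.2 hab.ne
  have hac' : a - c ≠ 0 := sub_ne_zero.2 (hab.trans hbc).ne
  have hbc' : b - c ≠ 0 := sub_ne_zero.2 hbc.ne
  have k1 : a ^ 2 + a * b + b ^ 2 + 9 * (a + b) + 24 * s = 0 := by
    have h : (a - b) * (a ^ 2 + a * b + b ^ 2 + 9 * (a + b) + 24 * s) = 0 := by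
      linear_combination ha - hb
    exact (mul_eq_zero.mp h).resolve_left hab'
  have k2 : a ^ 2 + a * c + c ^ 2 + 9 * (a + c) + 24 * s = 0 := by
    have h : (a - c) * (a ^ 2 + a * c + c ^ 2 + 9 * (a + c) + 24 * s) = 0 := by
      linear_combination ha - hc
    exact (mul_eq_zero.mp h).resolve_left hac'
  have e1 : a + b + c = -9 := by
    have h : (b - c) * (a + b + c + 9) = 0 := by linear_combination k1 - k2
    have := (mul_eq_zero.mp h).resolve_left hbc'
    linarith
  have e2 : a * b + a * c + b * c = 24 * s := by
    linear_combination -k1 + (a + b) * e1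
  have e3 : a * b * c = -(16 * s ^ 2) := by
    linear_combination ha + a * e2 - a ^ 2 * e1
  have hfac : ∀ x : ℝ, x ^ 3 + 9 * x ^ 2 + 24 * s * x + 16 * s ^ 2
      = (x - a) * ((x - b) * (x - c)) := by
    intro x
    linear_combination x ^ 2 * e1 - x * e2 + e3
  have hc0 : c < 0 := by
    by_contra h
    push_neg at h
    nlinarith [pow_nonneg h 3, pow_nonneg h 2, mul_nonneg hs0.le h, pow_pos hs0 2]
  have ha3 : a < -3 := by linarith
  -- c > -3 (via q(-4s/3) < 0)
  have hcgt : -3 < c := by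
    have hx : ((-4 * s / 3 : ℝ) - a) * (((-4 * s / 3 : ℝ) - b) * ((-4 * s / 3 : ℝ) - c)) < 0 := by
      rw [← hfac]
      nlinarith [pow_pos hs0 3]
    have hxa : (0:ℝ) < (-4 * s / 3 : ℝ) - a := by linarith
    have h2 : ((-4 * s / 3 : ℝ) - b) * ((-4 * s / 3 : ℝ) - c) < 0 := by
      by_contra h
      push_neg at h
      have := mul_nonneg hxa.le h
      linarith
    have := (between_of_mul_neg hbc h2).2
    linarith
  -- a < -4 < b
  have h4 : (0:ℝ) < ((-4:ℝ) - a) * ((((-4:ℝ)) - b) * (((-4:ℝ)) - c)) := by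
    rw [← hfac]
    nlinarith [mul_pos (show (0:ℝ) < 1 - s by linarith) (show (0:ℝ) < 5 - s by linarith)]
  have h4ab : (((-4:ℝ)) - a) * (((-4:ℝ)) - b) < 0 := by
    rw [← mul_assoc] at h4
    by_contra h
    push_neg at h
    have hcc : ((-4:ℝ) - c) ≤ 0 := by linarith
    nlinarith [mul_nonpos_of_nonneg_of_nonpos h hcc]
  have hb4 : -4 < b := (between_of_mul_neg hab h4ab).2
  have ha4 : a < -4 := (between_of_mul_neg hab h4ab).1
  refine ⟨hfac, ha4, hb4, hc0, ?_⟩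
  -- gap
  set d : ℝ := Real.sqrt (1 - s) with hd
  have hd0 : 0 ≤ d := Real.sqrt_nonneg _
  have hd2 : d ^ 2 = 1 - s := Real.sq_sqrt (by linarith)
  have hd1 : d ≤ 1 := by
    rw [hd, Real.sqrt_le_one]
    linarith
  have hd3 : d ^ 3 = (1 - s) * d := by rw [pow_succ, hd2]
  have hδ : (0:ℝ) < 1 - s := by linarith
  have keyd : (1 - s) * d ≤ 1 - s := mul_le_of_le_one_right hδ.le hd1
  have hx1 : (0:ℝ) < ((-4 + d) - a) * (((-4 + d) - b) * ((-4 + d) - c)) := by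
    rw [← hfac]
    nlinarith [hd2, hd3, keyd, hδ, sq_nonneg (1 - s)]
  have hx1ab : ((-4 + d) - a) * ((-4 + d) - b) < 0 := by
    rw [← mul_assoc] at hx1
    by_contra h
    push_neg at h
    have hcc : ((-4 + d) - c) ≤ 0 := by linarith
    nlinarith [mul_nonpos_of_nonneg_of_nonpos h hcc]
  have := (between_of_mul_neg hab hx1ab).2
  linarith


lemma rpow_half_eval (u : ℝ) (hu : 0 ≤ u) :
    ∫ x in (0:ℝ)..u, x ^ (-(1/2) : ℝ) = 2 * Real.sqrt u := by
  rw [integral_rpow (Or.inl (by norm_num))]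
  rw [Real.zero_rpow (by norm_num), Real.sqrt_eq_rpow]
  norm_num
  ring

lemma half_left (K β γ : ℝ) (hK : 0 < K) (hβγ : β < γ) :
    IntegrableOn (fun x => (Real.sqrt (K * (x - β)))⁻¹) (Set.Ioc β γ) volume ∧
    (∫ x in Set.Ioc β γ, (Real.sqrt (K * (x - β)))⁻¹) ≤ 2 * Real.sqrt (γ - β) / Real.sqrt K := by
  have hKs : 0 < Real.sqrt K := Real.sqrt_pos.2 hK
  set g : ℝ → ℝ := fun x => (Real.sqrt K)⁻¹ * (x - β) ^ (-(1/2) : ℝ) with hg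
  have hEq : Set.EqOn (fun x => (Real.sqrt (K * (x - β)))⁻¹) g (Set.Ioc β γ) := by
    intro x hx
    have hxβ : (0:ℝ) ≤ x - β := by linarith [hx.1]
    simp only [hg]
    rw [Real.sqrt_mul hK.le, mul_inv, Real.rpow_neg hxβ, ← Real.sqrt_eq_rpow]
  have h0 : IntervalIntegrable (fun x : ℝ => x ^ (-(1/2) : ℝ)) volume 0 (γ - β) :=
    intervalIntegrable_rpow' (by norm_num)
  have hgInt : IntervalIntegrable g volume β γ := by
    have h1 := (h0.comp_sub_right β).const_mul ((Real.sqrt K)⁻¹)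
    simpa [hg] using h1
  have hval : ∫ x in β..γ, g x = (Real.sqrt K)⁻¹ * (2 * Real.sqrt (γ - β)) := by
    simp only [hg]
    rw [intervalIntegral.integral_const_mul]
    have h2 : ∫ x in β..γ, (x - β) ^ (-(1/2):ℝ)
        = ∫ x in β - β..γ - β, x ^ (-(1/2):ℝ) :=
      intervalIntegral.integral_comp_sub_right (fun x : ℝ => x ^ (-(1/2):ℝ)) β
    rw [h2, sub_self, rpow_half_eval _ (by linarith)]
  constructor
  · exact (hgInt.1).congr_fun hEq.symm measurableSet_Ioc
  · calc ∫ x in Set.Ioc β γ, (Real.sqrt (K * (x - β)))⁻¹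
        = ∫ x in Set.Ioc β γ, g x := setIntegral_congr_fun measurableSet_Ioc hEq
      _ = ∫ x in β..γ, g x := (intervalIntegral.integral_of_le hβγ.le).symm
      _ = (Real.sqrt K)⁻¹ * (2 * Real.sqrt (γ - β)) := hval
      _ ≤ 2 * Real.sqrt (γ - β) / Real.sqrt K := le_of_eq (by rw [div_eq_mul_inv]; ring)

lemma half_right (K β γ : ℝ) (hK : 0 < K) (hβγ : β < γ) :
    IntegrableOn (fun x => (Real.sqrt (K * (γ - x)))⁻¹) (Set.Ioc β γ) volume ∧
    (∫ x in Set.Ioc β γ, (Real.sqrt (K * (γ - x)))⁻¹) ≤ 2 * Real.sqrt (γ - β) / Real.sqrt K := by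
  have hKs : 0 < Real.sqrt K := Real.sqrt_pos.2 hK
  set g : ℝ → ℝ := fun x => (Real.sqrt K)⁻¹ * (γ - x) ^ (-(1/2) : ℝ) with hg
  have hEq : Set.EqOn (fun x => (Real.sqrt (K * (γ - x)))⁻¹) g (Set.Ioc β γ) := by
    intro x hx
    have hxγ : (0:ℝ) ≤ γ - x := by linarith [hx.2]
    simp only [hg]
    rw [Real.sqrt_mul hK.le, mul_inv, Real.rpow_neg hxγ, ← Real.sqrt_eq_rpow]
  have h0 : IntervalIntegrable (fun x : ℝ => x ^ (-(1/2) : ℝ)) volume 0 (γ - β) :=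
    intervalIntegrable_rpow' (by norm_num)
  have hgInt : IntervalIntegrable g volume β γ := by
    have h1 := ((h0.comp_sub_left γ).const_mul ((Real.sqrt K)⁻¹)).symm
    simpa [hg] using h1
  have hval : ∫ x in β..γ, g x = (Real.sqrt K)⁻¹ * (2 * Real.sqrt (γ - β)) := by
    simp only [hg]
    rw [intervalIntegral.integral_const_mul]
    have h2 : ∫ x in β..γ, (γ - x) ^ (-(1/2):ℝ)
        = ∫ x in γ - γ..γ - β, x ^ (-(1/2):ℝ) :=
      intervalIntegral.integral_comp_sub_left (fun x : ℝ => x ^ (-(1/2):ℝ)) γ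
    rw [h2, sub_self, rpow_half_eval _ (by linarith)]
  constructor
  · exact (hgInt.1).congr_fun hEq.symm measurableSet_Ioc
  · calc ∫ x in Set.Ioc β γ, (Real.sqrt (K * (γ - x)))⁻¹
        = ∫ x in Set.Ioc β γ, g x := setIntegral_congr_fun measurableSet_Ioc hEq
      _ = ∫ x in β..γ, g x := (intervalIntegral.integral_of_le hβγ.le).symm
      _ = (Real.sqrt K)⁻¹ * (2 * Real.sqrt (γ - β)) := hval
      _ ≤ 2 * Real.sqrt (γ - β) / Real.sqrt K := le_of_eq (by rw [div_eq_mul_inv]; ring)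

lemma inner_int (a b c : ℝ) (hab : a < b) (hbc : b < c) :
    IntervalIntegrable (fun x => (Real.sqrt ((x - a) * ((x - b) * (c - x))))⁻¹) volume b c ∧
    (0 < ∫ x in b..c, (Real.sqrt ((x - a) * ((x - b) * (c - x))))⁻¹) ∧
    (∫ x in b..c, (Real.sqrt ((x - a) * ((x - b) * (c - x))))⁻¹) ≤ 4 / Real.sqrt (b - a) := by
  set F : ℝ → ℝ := fun x => (Real.sqrt ((x - a) * ((x - b) * (c - x))))⁻¹ with hF
  set m : ℝ := (b + c) / 2 with hm
  have hbm : b < m := by rw [hm]; linarith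
  have hmc : m < c := by rw [hm]; linarith
  set K : ℝ := (b - a) * ((c - b) / 2) with hK
  have hK0 : 0 < K := by rw [hK]; exact mul_pos (by linarith) (by linarith)
  have hFmeas : Measurable F := by
    apply Measurable.inv
    exact (Real.continuous_sqrt.comp (by continuity)).measurable
  have hFnonneg : ∀ x, 0 ≤ F x := fun x => inv_nonneg.2 (Real.sqrt_nonneg _)
  -- left piece
  have hbl : ∀ x ∈ Set.Ioc b m, F x ≤ (Real.sqrt (K * (x - b)))⁻¹ := by
    intro x hx
    have h1 : 0 < x - b := by linarith [hx.1]
    have h2 : (c - b) / 2 ≤ c - x := by rw [hm] at hx; linarith [hx.2]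
    have h3 : b - a < x - a := by linarith [hx.1]
    have hprod : K * (x - b) ≤ (x - a) * ((x - b) * (c - x)) := by
      have hstep : (b - a) * ((c - b) / 2) ≤ (x - a) * (c - x) :=
        mul_le_mul h3.le h2 (by linarith) (by linarith)
      calc K * (x - b) ≤ ((x - a) * (c - x)) * (x - b) := by
            rw [hK]; exact mul_le_mul_of_nonneg_right hstep h1.le
        _ = (x - a) * ((x - b) * (c - x)) := by ring
    have hKx : 0 < K * (x - b) := by positivity
    exact inv_anti₀ (Real.sqrt_pos.2 hKx) (Real.sqrt_le_sqrt hprod)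
  have hIl : IntegrableOn F (Set.Ioc b m) volume := by
    refine ((half_left K b m hK0 hbm).1).mono' hFmeas.aestronglyMeasurable.restrict ?_
    rw [ae_restrict_iff' measurableSet_Ioc]
    exact ae_of_all _ fun x hx => by
      rw [Real.norm_eq_abs, abs_of_nonneg (hFnonneg x)]; exact hbl x hx
  -- right piece
  have hbr : ∀ x ∈ Set.Ioc m c, F x ≤ (Real.sqrt (K * (c - x)))⁻¹ := by
    intro x hx
    rcases eq_or_lt_of_le hx.2 with rfl | hxc
    · simp [hF]
    · have h1 : 0 < c - x := by linarith
      have h2 : (c - b) / 2 ≤ x - b := by rw [hm] at hx; linarith [hx.1]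
      have h3 : b - a < x - a := by rw [hm] at hx; linarith [hx.1]
      have hprod : K * (c - x) ≤ (x - a) * ((x - b) * (c - x)) := by
        have hstep : (b - a) * ((c - b) / 2) ≤ (x - a) * (x - b) :=
          mul_le_mul h3.le h2 (by linarith) (by linarith)
        calc K * (c - x) ≤ ((x - a) * (x - b)) * (c - x) := by
              rw [hK]; exact mul_le_mul_of_nonneg_right hstep h1.le
          _ = (x - a) * ((x - b) * (c - x)) := by ring
      have hKx : 0 < K * (c - x) := by positivity
      exact inv_anti₀ (Real.sqrt_pos.2 hKx) (Real.sqrt_le_sqrt hprod)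
  have hIr : IntegrableOn F (Set.Ioc m c) volume := by
    refine ((half_right K m c hK0 hmc).1).mono' hFmeas.aestronglyMeasurable.restrict ?_
    rw [ae_restrict_iff' measurableSet_Ioc]
    exact ae_of_all _ fun x hx => by
      rw [Real.norm_eq_abs, abs_of_nonneg (hFnonneg x)]; exact hbr x hx
  have l1 : IntervalIntegrable F volume b m :=
    (intervalIntegrable_iff_integrableOn_Ioc_of_le hbm.le).2 hIl
  have l2 : IntervalIntegrable F volume m c :=
    (intervalIntegrable_iff_integrableOn_Ioc_of_le hmc.le).2 hIr
  have hInt : IntervalIntegrable F volume b c := l1.trans l2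
  refine ⟨hInt, ?_, ?_⟩
  · refine intervalIntegral_pos_of_pos_on hInt (fun x hx => ?_) hbc
    have : 0 < (x - a) * ((x - b) * (c - x)) := by
      have := hx.1; have := hx.2
      apply mul_pos (by linarith) (mul_pos (by linarith) (by linarith))
    exact inv_pos.2 (Real.sqrt_pos.2 this)
  · have hsplit : ∫ x in b..c, F x = (∫ x in b..m, F x) + ∫ x in m..c, F x :=
      (integral_add_adjacent_intervals l1 l2).symm
    have hw2 : 0 < Real.sqrt ((c - b) / 2) := Real.sqrt_pos.2 (by linarith)
    have hba : 0 < Real.sqrt (b - a) := Real.sqrt_pos.2 (by linarith)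
    have e1 : ∫ x in b..m, F x ≤ 2 * Real.sqrt ((c - b) / 2) / Real.sqrt K := by
      rw [integral_of_le hbm.le]
      have := setIntegral_mono_on hIl (half_left K b m hK0 hbm).1 measurableSet_Ioc hbl
      have h2 := (half_left K b m hK0 hbm).2
      have hmb : m - b = (c - b) / 2 := by rw [hm]; ring
      rw [hmb] at h2
      exact this.trans h2
    have e2 : ∫ x in m..c, F x ≤ 2 * Real.sqrt ((c - b) / 2) / Real.sqrt K := by
      rw [integral_of_le hmc.le]
      have := setIntegral_mono_on hIr (half_right K m c hK0 hmc).1 measurableSet_Ioc hbr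
      have h2 := (half_right K m c hK0 hmc).2
      have hcm : c - m = (c - b) / 2 := by rw [hm]; ring
      rw [hcm] at h2
      exact this.trans h2
    have hKsqrt : Real.sqrt K = Real.sqrt (b - a) * Real.sqrt ((c - b) / 2) := by
      rw [hK, Real.sqrt_mul (by linarith)]
    rw [hsplit]
    have : 2 * Real.sqrt ((c - b) / 2) / Real.sqrt K = 2 / Real.sqrt (b - a) := by
      rw [hKsqrt, div_eq_div_iff (mul_pos hba hw2).ne' hba.ne']
      ring
    rw [this] at e1 e2
    have : 4 / Real.sqrt (b - a) = 2 / Real.sqrt (b - a) + 2 / Real.sqrt (b - a) := by ring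
    rw [this]
    exact add_le_add e1 e2

/-- Let `l, j ≥ 1` and for `t ∈ (0,1)` let `r₁(t) < r₂(t) < r₃(t)` be the three real roots of
`q_t(x) = x³ + 9x² + 24tˡx + 16t^{2l}`.  Then (i) the improper integral
`Q(t) = ∫_{r₂(t)}^{r₃(t)} dx/√(-q_t(x))` converges to a positive real number for each
`t ∈ (0,1)`; (ii) `t ↦ t^{j-1} Q(t)` is integrable on `(0,1)`; and (iii)
`∫₀¹ t^{j-1} Q(t) dt > 0`. -/
theorem period_integral_Gamma_pos (l j : ℕ) (hl : 1 ≤ l) (hj : 1 ≤ j)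
    (r₁ r₂ r₃ : ℝ → ℝ)
    (hlt : ∀ t ∈ Set.Ioo (0 : ℝ) 1, r₁ t < r₂ t ∧ r₂ t < r₃ t)
    (hroot : ∀ t ∈ Set.Ioo (0 : ℝ) 1, ∀ r ∈ ({r₁ t, r₂ t, r₃ t} : Set ℝ),
      r ^ 3 + 9 * r ^ 2 + 24 * t ^ l * r + 16 * t ^ (2 * l) = 0)
    (hall : ∀ t ∈ Set.Ioo (0 : ℝ) 1, ∀ x : ℝ,
      x ^ 3 + 9 * x ^ 2 + 24 * t ^ l * x + 16 * t ^ (2 * l) = 0 →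
        x = r₁ t ∨ x = r₂ t ∨ x = r₃ t)
    (Q : ℝ → ℝ)
    (hQ : ∀ t, Q t = ∫ x in (r₂ t)..(r₃ t),
      1 / Real.sqrt (-(x ^ 3 + 9 * x ^ 2 + 24 * t ^ l * x + 16 * t ^ (2 * l)))) :
    (∀ t ∈ Set.Ioo (0 : ℝ) 1,
      IntervalIntegrable
        (fun x => 1 / Real.sqrt (-(x ^ 3 + 9 * x ^ 2 + 24 * t ^ l * x + 16 * t ^ (2 * l))))
        volume (r₂ t) (r₃ t) ∧ 0 < Q t) ∧
    IntegrableOn (fun t => t ^ (j - 1) * Q t) (Set.Ioo (0 : ℝ) 1) volume ∧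
    0 < ∫ t in Set.Ioo (0 : ℝ) 1, t ^ (j - 1) * Q t := by
  set G : ℝ → ℝ → ℝ := fun t x =>
    (Real.sqrt (-(x ^ 3 + 9 * x ^ 2 + 24 * t ^ l * x + 16 * t ^ (2 * l))))⁻¹ with hGdef
  have main : ∀ t ∈ Set.Ioo (0 : ℝ) 1,
      (IntervalIntegrable
        (fun x => 1 / Real.sqrt (-(x ^ 3 + 9 * x ^ 2 + 24 * t ^ l * x + 16 * t ^ (2 * l))))
        volume (r₂ t) (r₃ t)) ∧ 0 < Q t ∧ Q t ≤ 4 / Real.sqrt (1 - t) ∧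
        Q t = ∫ x in Set.Ioo (-4 : ℝ) 0, G t x := by
    intro t ht
    obtain ⟨hab, hbc⟩ := hlt t ht
    set a := r₁ t
    set b := r₂ t
    set c := r₃ t
    have hs2 : t ^ (2 * l) = (t ^ l) ^ 2 := by rw [two_mul, pow_add, sq]
    have hs0 : 0 < t ^ l := pow_pos ht.1 l
    have hs1 : t ^ l < 1 := pow_lt_one₀ ht.1.le ht.2 (by omega)
    have hst : t ^ l ≤ t := by
      calc t ^ l ≤ t ^ 1 := pow_le_pow_of_le_one ht.1.le ht.2.le hl
        _ = t := pow_one t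
    have ha := hroot t ht a (by left; rfl)
    have hb := hroot t ht b (by right; left; rfl)
    have hc := hroot t ht c (by right; right; rfl)
    rw [hs2] at ha hb hc
    obtain ⟨hfac, ha4, hb4, hc0, hgap⟩ :=
      key_alg (t ^ l) a b c hs0 hs1 hab hbc ha hb hc
    -- gap in terms of t
    have hgap' : 1 - t < b - a := by
      have h1 : 1 - t ≤ 1 - t ^ l := by linarith
      have h2 : 1 - t ^ l ≤ Real.sqrt (1 - t ^ l) := by
        nlinarith [Real.sq_sqrt (show (0:ℝ) ≤ 1 - t ^ l by linarith),
          Real.sqrt_nonneg (1 - t ^ l), Real.sqrt_le_one.2 (show (1:ℝ) - t ^ l ≤ 1 by nlinarith)]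
      linarith
    -- function equality
    have hfac' : ∀ x : ℝ, -(x ^ 3 + 9 * x ^ 2 + 24 * t ^ l * x + 16 * t ^ (2 * l))
        = (x - a) * ((x - b) * (c - x)) := by
      intro x
      rw [hs2]
      linear_combination -hfac x
    have funeq : (fun x => 1 / Real.sqrt
          (-(x ^ 3 + 9 * x ^ 2 + 24 * t ^ l * x + 16 * t ^ (2 * l))))
        = fun x => (Real.sqrt ((x - a) * ((x - b) * (c - x))))⁻¹ := by
      funext x
      rw [one_div, hfac' x]
    obtain ⟨hII, hpos, hbound⟩ := inner_int a b c hab hbc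
    have hQt : Q t = ∫ x in b..c, (Real.sqrt ((x - a) * ((x - b) * (c - x))))⁻¹ := by
      rw [hQ t, funeq]
    refine ⟨by rw [funeq]; exact hII, by rw [hQt]; exact hpos, ?_, ?_⟩
    · rw [hQt]
      refine hbound.trans ?_
      have h1 : Real.sqrt (1 - t) ≤ Real.sqrt (b - a) := Real.sqrt_le_sqrt (by linarith)
      have h2 : 0 < Real.sqrt (1 - t) := Real.sqrt_pos.2 (by linarith [ht.2])
      gcongr
    · -- Q t = ∫ over Ioo (-4) 0
      have hGeq : (fun x => (Real.sqrt ((x - a) * ((x - b) * (c - x))))⁻¹) = G t := by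
        funext x
        rw [hGdef]
        simp only
        rw [hfac' x]
      have hsub : Set.Ioo b c ⊆ Set.Ioo (-4 : ℝ) 0 :=
        Set.Ioo_subset_Ioo hb4.le hc0.le
      have hvanish : ∀ x ∈ Set.Ioo (-4 : ℝ) 0 \ Set.Ioo b c, G t x = 0 := by
        intro x hx
        obtain ⟨hx1, hx2⟩ := hx
        have hxa : a < x := by linarith [hx1.1]
        have hq : 0 ≤ (x - a) * ((x - b) * (x - c)) := by
          rw [Set.mem_Ioo, not_and_or, not_lt, not_lt] at hx2
          rcases hx2 with h | h
          · refine mul_nonneg (by linarith) ?_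
            nlinarith [hx1.2, hbc]
          · exact mul_nonneg (by linarith) (mul_nonneg (by linarith) (by linarith))
        rw [hGdef]
        simp only
        have : -(x ^ 3 + 9 * x ^ 2 + 24 * t ^ l * x + 16 * t ^ (2 * l)) ≤ 0 := by
          rw [hs2]
          linarith [hfac x]
        rw [Real.sqrt_eq_zero'.mpr this]
        exact inv_zero
      calc Q t = ∫ x in b..c, G t x := by rw [hQt, hGeq]
        _ = ∫ x in Set.Ioc b c, G t x := integral_of_le hbc.le
        _ = ∫ x in Set.Ioo b c, G t x := integral_Ioc_eq_integral_Ioo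
        _ = ∫ x in Set.Ioo (-4 : ℝ) 0, G t x :=
          (setIntegral_eq_of_subset_of_forall_diff_eq_zero measurableSet_Ioo hsub hvanish).symm
  have hGm : Measurable (Function.uncurry G) := by
    apply Measurable.inv
    apply Continuous.measurable
    apply Real.continuous_sqrt.comp
    have : Continuous (fun p : ℝ × ℝ =>
        -(p.2 ^ 3 + 9 * p.2 ^ 2 + 24 * p.1 ^ l * p.2 + 16 * p.1 ^ (2 * l))) := by
      fun_prop
    exact this
  have hΦmeas : StronglyMeasurable (fun t => ∫ x in Set.Ioo (-4:ℝ) 0, G t x) :=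
    MeasureTheory.StronglyMeasurable.integral_prod_right hGm.stronglyMeasurable
  have hfae : (fun t => t ^ (j-1) * ∫ x in Set.Ioo (-4:ℝ) 0, G t x)
      =ᵐ[volume.restrict (Set.Ioo (0:ℝ) 1)] (fun t => t ^ (j-1) * Q t) := by
    filter_upwards [ae_restrict_mem measurableSet_Ioo] with t ht
    rw [(main t ht).2.2.2]
  have hfmeas : AEStronglyMeasurable (fun t => t ^ (j-1) * Q t)
      (volume.restrict (Set.Ioo (0:ℝ) 1)) :=
    (((continuous_pow (j-1)).measurable.mul hΦmeas.measurable).aestronglyMeasurable).congr hfae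
  have hDom : IntegrableOn (fun t => 4 / Real.sqrt (1 - t)) (Set.Ioo (0:ℝ) 1) volume := by
    have h1 := (half_right 1 0 1 one_pos one_pos).1
    have h2 : IntegrableOn (fun x : ℝ => (Real.sqrt (1 * (1 - x)))⁻¹)
        (Set.Ioo (0:ℝ) 1) volume := h1.mono_set Set.Ioo_subset_Ioc_self
    have h3 := h2.const_mul (4:ℝ)
    refine IntegrableOn.congr_fun h3 ?_ measurableSet_Ioo
    intro x _
    simp only [one_mul, div_eq_mul_inv]
  have hbnd : ∀ᵐ t ∂volume.restrict (Set.Ioo (0:ℝ) 1),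
      ‖t ^ (j-1) * Q t‖ ≤ 4 / Real.sqrt (1 - t) := by
    filter_upwards [ae_restrict_mem measurableSet_Ioo] with t ht
    obtain ⟨-, hQpos, hQb, -⟩ := main t ht
    have hp1 : t ^ (j-1) ≤ 1 := pow_le_one₀ ht.1.le ht.2.le
    have hp0 : (0:ℝ) ≤ t ^ (j-1) := pow_nonneg ht.1.le _
    rw [Real.norm_eq_abs, abs_of_nonneg (mul_nonneg hp0 hQpos.le)]
    calc t ^ (j-1) * Q t ≤ 1 * Q t := mul_le_mul_of_nonneg_right hp1 hQpos.le
      _ = Q t := one_mul _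
      _ ≤ 4 / Real.sqrt (1 - t) := hQb
  have hint : IntegrableOn (fun t => t ^ (j-1) * Q t) (Set.Ioo (0:ℝ) 1) volume :=
    Integrable.mono' hDom hfmeas hbnd
  refine ⟨fun t ht => ⟨(main t ht).1, (main t ht).2.1⟩, hint, ?_⟩
  have hnn : 0 ≤ᵐ[volume.restrict (Set.Ioo (0:ℝ) 1)] fun t => t ^ (j-1) * Q t := by
    filter_upwards [ae_restrict_mem measurableSet_Ioo] with t ht
    exact mul_nonneg (pow_nonneg ht.1.le _) (main t ht).2.1.le
  rw [setIntegral_pos_iff_support_of_nonneg_ae hnn hint]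
  have hsub : Set.Ioo (0:ℝ) 1 ⊆ Function.support fun t => t ^ (j-1) * Q t := by
    intro t ht
    exact (mul_pos (pow_pos ht.1 _) (main t ht).2.1).ne'
  rw [Set.inter_eq_self_of_subset_right hsub, Real.volume_Ioo]
  norm_num
end
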